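/- arXiv:1508.05784 — 4 statements merged into one kernel-verified Lean document; each statement's English description precedes it below -/
import Mathlib

section
/- Let π be a half-circle with center O and radius r > 0, and let p_1, …, p_N (N ≥ 3) be distinct points on π ordered along the arc. For each j ∈ {2, …, N−1}, let S_j ⊆ ℝ² be a set contained in the interior of triangle p_{j−1} p_j p_{j+1} and in the interior of triangle p_1 p_j p_N, and set S_1 = S_N = ∅. Then for all indices 1 ≤ l < q < j ≤ N, for every point x ∈ {p_l} ∪ S_l and every point y ∈ {p_j} ∪ S_j, the points x and y are distinct, all points of {p_q} ∪ S_q lie strictly in one of the two open half-planes bounded by the line through x and y, and the center O does not lie in that open half-plane. -/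
open Set Metric Bornology
open scoped RealInnerProductSpace

noncomputable section

/-- The Euclidean plane. -/
abbrev E2 : Type := EuclideanSpace ℝ (Fin 2)

/-- The point of the circle with center `O` and radius `r` at angle `θ`. -/
def circPt (O : E2) (r θ : ℝ) : E2 :=
  O + r • (WithLp.equiv 2 (Fin 2 → ℝ)).symm ![Real.cos θ, Real.sin θ]

/-- The 2D cross product (signed area form) of two vectors of the plane. -/
def cross2 (u v : E2) : ℝ := u 0 * v 1 - u 1 * v 0

namespace SepAux

/-- Orientation form of the triple (x,y,z). -/
def Fc (x y z : E2) : ℝ := cross2 (y - x) (z - x)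

lemma Fc_eq (x y z : E2) :
    Fc x y z = (y 0 - x 0) * (z 1 - x 1) - (y 1 - x 1) * (z 0 - x 0) := by
  simp [Fc, cross2, PiLp.sub_apply]

lemma combo_apply (t : ℝ) (u v : E2) (k : Fin 2) :
    ((1 - t) • u + t • v) k = (1 - t) * u k + t * v k := by
  simp [PiLp.add_apply, PiLp.smul_apply, smul_eq_mul]

lemma Fc_self_xy (x z : E2) : Fc x x z = 0 := by rw [Fc_eq]; ring
lemma Fc_self_xz (x y : E2) : Fc x y x = 0 := by rw [Fc_eq]; ring
lemma Fc_self_yz (x y : E2) : Fc x y y = 0 := by rw [Fc_eq]; ring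

lemma Fc_swap_xy (x y z : E2) : Fc y x z = -Fc x y z := by rw [Fc_eq, Fc_eq]; ring
lemma Fc_swap_yz (x y z : E2) : Fc x z y = -Fc x y z := by rw [Fc_eq, Fc_eq]; ring
lemma Fc_swap_xz (x y z : E2) : Fc z y x = -Fc x y z := by rw [Fc_eq, Fc_eq]; ring

lemma Fc_aff_z (x y u v : E2) (t : ℝ) :
    Fc x y ((1 - t) • u + t • v) = (1 - t) * Fc x y u + t * Fc x y v := by
  simp [Fc_eq, combo_apply]; ring

lemma Fc_aff_y (x u v z : E2) (t : ℝ) :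
    Fc x ((1 - t) • u + t • v) z = (1 - t) * Fc x u z + t * Fc x v z := by
  simp [Fc_eq, combo_apply]; ring

lemma Fc_aff_x (u v y z : E2) (t : ℝ) :
    Fc ((1 - t) • u + t • v) y z = (1 - t) * Fc u y z + t * Fc v y z := by
  simp [Fc_eq, combo_apply]; ring

/-- convex combination with given parameter. -/
def IsCombo (w u v : E2) : Prop := ∃ t : ℝ, 0 ≤ t ∧ t ≤ 1 ∧ w = (1 - t) • u + t • v

lemma combo_z_nonneg {e : ℝ} {x y w u v : E2} (h : IsCombo w u v)
    (h1 : 0 ≤ e * Fc x y u) (h2 : 0 ≤ e * Fc x y v) : 0 ≤ e * Fc x y w := by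
  obtain ⟨t, ht0, ht1, rfl⟩ := h
  rw [Fc_aff_z]; nlinarith

lemma combo_y_nonneg {e : ℝ} {x y w u v : E2} (h : IsCombo y u v)
    (h1 : 0 ≤ e * Fc x u w) (h2 : 0 ≤ e * Fc x v w) : 0 ≤ e * Fc x y w := by
  obtain ⟨t, ht0, ht1, rfl⟩ := h
  rw [Fc_aff_y]; nlinarith

lemma combo_x_nonneg {e : ℝ} {x y w u v : E2} (h : IsCombo x u v)
    (h1 : 0 ≤ e * Fc u y w) (h2 : 0 ≤ e * Fc v y w) : 0 ≤ e * Fc x y w := by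
  obtain ⟨t, ht0, ht1, rfl⟩ := h
  rw [Fc_aff_x]; nlinarith

lemma combo_y_nonpos {e : ℝ} {x y w u v : E2} (h : IsCombo y u v)
    (h1 : e * Fc x u w ≤ 0) (h2 : e * Fc x v w ≤ 0) : e * Fc x y w ≤ 0 := by
  obtain ⟨t, ht0, ht1, rfl⟩ := h
  rw [Fc_aff_y]; nlinarith

lemma combo_x_nonpos {e : ℝ} {x y w u v : E2} (h : IsCombo x u v)
    (h1 : e * Fc u y w ≤ 0) (h2 : e * Fc v y w ≤ 0) : e * Fc x y w ≤ 0 := by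
  obtain ⟨t, ht0, ht1, rfl⟩ := h
  rw [Fc_aff_x]; nlinarith

lemma combo_x_pos {e t : ℝ} {x y w u v : E2} (ht0 : 0 ≤ t) (ht1 : t < 1)
    (hx : x = (1 - t) • u + t • v)
    (h1 : 0 < e * Fc u y w) (h2 : 0 ≤ e * Fc v y w) : 0 < e * Fc x y w := by
  subst hx; rw [Fc_aff_x]; nlinarith

lemma combo_y_pos {e t : ℝ} {x y w u v : E2} (ht0 : 0 ≤ t) (ht1 : t < 1)
    (hy : y = (1 - t) • u + t • v)
    (h1 : 0 < e * Fc x u w) (h2 : 0 ≤ e * Fc x v w) : 0 < e * Fc x y w := by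
  subst hy; rw [Fc_aff_y]; nlinarith

lemma combo_z_pos {e t : ℝ} {x y w u v : E2} (ht0 : 0 ≤ t) (ht1 : t < 1)
    (hw : w = (1 - t) • u + t • v)
    (h1 : 0 < e * Fc x y u) (h2 : 0 ≤ e * Fc x y v) : 0 < e * Fc x y w := by
  subst hw; rw [Fc_aff_z]; nlinarith

open Real

lemma circPt_apply0 (O : E2) (r θ : ℝ) : (circPt O r θ) 0 = O 0 + r * Real.cos θ := by
  simp [circPt, PiLp.add_apply, PiLp.smul_apply, WithLp.equiv_symm_apply, PiLp.toLp_apply, smul_eq_mul]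
lemma circPt_apply1 (O : E2) (r θ : ℝ) : (circPt O r θ) 1 = O 1 + r * Real.sin θ := by
  simp [circPt, PiLp.add_apply, PiLp.smul_apply, WithLp.equiv_symm_apply, PiLp.toLp_apply, smul_eq_mul]

lemma T1eq (O : E2) (r α β γ : ℝ) :
    Fc (circPt O r α) (circPt O r β) (circPt O r γ)
      = r ^ 2 * (Real.sin (γ - β) + Real.sin (β - α) + Real.sin (α - γ)) := by
  rw [Fc_eq, circPt_apply0, circPt_apply1, circPt_apply0, circPt_apply1,
    circPt_apply0, circPt_apply1, Real.sin_sub, Real.sin_sub, Real.sin_sub]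
  ring

lemma T2eq (O : E2) (r α β : ℝ) :
    Fc (circPt O r α) (circPt O r β) O = r ^ 2 * Real.sin (β - α) := by
  rw [Fc_eq, circPt_apply0, circPt_apply1, circPt_apply0, circPt_apply1, Real.sin_sub]
  ring

lemma trig_le {α β γ : ℝ} (h1 : α ≤ γ) (h2 : γ ≤ β) (h3 : β - α ≤ π) :
    Real.sin (γ - β) + Real.sin (β - α) + Real.sin (α - γ) ≤ 0 := by
  set u := γ - α with hu
  set v := β - α with hv
  have e1 : γ - β = u - v := by rw [hu, hv]; ring
  have e2 : α - γ = -u := by rw [hu]; ring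
  have hu0 : 0 ≤ u := by simp [hu]; linarith
  have huv : u ≤ v := by rw [hu, hv]; linarith
  have hvπ : v ≤ π := by rw [hv]; linarith
  have hsv : Real.sin v = Real.sin u * Real.cos (v - u) + Real.cos u * Real.sin (v - u) := by
    have : v = u + (v - u) := by ring
    rw [this, Real.sin_add]; ring_nf
  have h4 : 0 ≤ Real.sin u := Real.sin_nonneg_of_nonneg_of_le_pi hu0 (by linarith)
  have h5 : 0 ≤ Real.sin (v - u) := Real.sin_nonneg_of_nonneg_of_le_pi (by linarith) (by linarith)
  have h6 : Real.cos (v - u) ≤ 1 := Real.cos_le_one _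
  have h7 : Real.cos u ≤ 1 := Real.cos_le_one _
  have e3 : Real.sin (u - v) = -Real.sin (v - u) := by rw [← Real.sin_neg]; ring_nf
  rw [e1, e2, Real.sin_neg, e3]
  nlinarith [mul_nonneg h4 (by linarith : 0 ≤ 1 - Real.cos (v - u)),
    mul_nonneg h5 (by linarith : 0 ≤ 1 - Real.cos u)]

lemma trig_lt {α β γ : ℝ} (h1 : α < γ) (h2 : γ < β) (h3 : β - α ≤ π) :
    Real.sin (γ - β) + Real.sin (β - α) + Real.sin (α - γ) < 0 := by
  set u := γ - α with hu
  set v := β - α with hv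
  have e1 : γ - β = u - v := by rw [hu, hv]; ring
  have e2 : α - γ = -u := by rw [hu]; ring
  have hu0 : 0 < u := by rw [hu]; linarith
  have huv : u < v := by rw [hu, hv]; linarith
  have hvπ : v ≤ π := by rw [hv]; linarith
  have h4 : 0 ≤ Real.sin u := Real.sin_nonneg_of_nonneg_of_le_pi (le_of_lt hu0) (by linarith)
  have h5 : 0 < Real.sin (v - u) := Real.sin_pos_of_pos_of_lt_pi (by linarith) (by linarith)
  have h6 : Real.cos (v - u) ≤ 1 := Real.cos_le_one _
  have h7 : Real.cos u < 1 := by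
    have := Real.strictAntiOn_cos (Set.mem_Icc.mpr ⟨le_refl 0, le_of_lt Real.pi_pos⟩)
      (Set.mem_Icc.mpr ⟨le_of_lt hu0, by linarith⟩) hu0
    simpa using this
  have hsv : Real.sin v = Real.sin u * Real.cos (v - u) + Real.cos u * Real.sin (v - u) := by
    have : v = u + (v - u) := by ring
    rw [this, Real.sin_add]; ring_nf
  have e3 : Real.sin (u - v) = -Real.sin (v - u) := by rw [← Real.sin_neg]; ring_nf
  rw [e1, e2, Real.sin_neg, e3]
  nlinarith [mul_nonneg h4 (by linarith : 0 ≤ 1 - Real.cos (v - u)),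
    mul_pos h5 (by linarith : 0 < 1 - Real.cos u)]

lemma circPt_ne (O : E2) {r α β : ℝ} (hr : 0 < r) (h1 : α < β) (h2 : β - α ≤ π) :
    circPt O r α ≠ circPt O r β := by
  intro h
  have hc : Real.cos α = Real.cos β := by
    have h0 := congrArg (fun w : E2 => w 0) h
    simp [circPt_apply0] at h0
    rcases h0 with h0 | h0
    · exact h0
    · exact absurd h0 (ne_of_gt hr)
  have hs : Real.sin α = Real.sin β := by
    have h0 := congrArg (fun w : E2 => w 1) h
    simp [circPt_apply1] at h0
    rcases h0 with h0 | h0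
    · exact h0
    · exact absurd h0 (ne_of_gt hr)
  have h3 : Real.cos (β - α) = 1 := by
    rw [Real.cos_sub, ← hc, ← hs]
    nlinarith [Real.sin_sq_add_cos_sq α]
  obtain ⟨n, hn⟩ := (Real.cos_eq_one_iff _).mp h3
  have hπ := Real.pi_pos
  have hn0 : (0:ℝ) < n * (2 * π) := by rw [hn]; linarith
  have hz : (0:ℤ) < n := by
    by_contra hcon
    push_neg at hcon
    have : (n:ℝ) ≤ 0 := by exact_mod_cast hcon
    nlinarith
  have : (1:ℝ) ≤ (n:ℝ) := by exact_mod_cast hz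
  nlinarith

lemma cross2_eqd (u v : E2) : cross2 u v = u 0 * v 1 - u 1 * v 0 := rfl

lemma e2_ne_zero_iff (u : E2) : u ≠ 0 ↔ (u 0 ≠ 0 ∨ u 1 ≠ 0) := by
  constructor
  · intro h
    by_contra hc
    push_neg at hc
    exact h (by ext k; fin_cases k <;> simp [hc.1, hc.2])
  · intro h hu
    rcases h with h | h <;> [exact h (by rw [hu]; rfl); exact h (by rw [hu]; rfl)]

lemma cross2_zero_parallel {u w : E2} (h : cross2 u w = 0) (hu : u ≠ 0) :
    ∃ t : ℝ, w = t • u := by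
  rw [cross2_eqd] at h
  rcases (e2_ne_zero_iff u).mp hu with h0 | h0
  · refine ⟨w 0 / u 0, ?_⟩
    ext k; fin_cases k
    · simp [PiLp.smul_apply, smul_eq_mul]; field_simp
    · show w 1 = (w 0 / u 0) * u 1
      field_simp
      nlinarith [h]
  · refine ⟨w 1 / u 1, ?_⟩
    ext k; fin_cases k
    · show w 0 = (w 1 / u 1) * u 0
      field_simp
      nlinarith [h]
    · simp [PiLp.smul_apply, smul_eq_mul]; field_simp

lemma cross2_sub_affine (d c : E2) (t : ℝ) (u v : E2) :
    cross2 d (((1 - t) • u + t • v) - c)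
      = (1 - t) * cross2 d (u - c) + t * cross2 d (v - c) := by
  have h : ∀ (x y : E2) (k : Fin 2), (x - y) k = x k - y k := fun _ _ _ => rfl
  have h2 : ∀ (s : ℝ) (x y : E2) (k : Fin 2), ((1-s) • x + s • y) k = (1-s) * x k + s * y k := by
    intro s x y k; simp [PiLp.add_apply, PiLp.smul_apply, smul_eq_mul]
  simp only [cross2_eqd, h, h2]; ring

lemma cross2_add_smul (d c w e : E2) (t : ℝ) :
    cross2 d ((w + t • e) - c) = cross2 d (w - c) + t * cross2 d e := by
  have h : ∀ (x y : E2) (k : Fin 2), (x - y) k = x k - y k := fun _ _ _ => rfl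
  have h2 : ∀ (x y : E2) (k : Fin 2), (x + t • y) k = x k + t * y k := by
    intro x y k; simp [PiLp.add_apply, PiLp.smul_apply, smul_eq_mul]
  simp only [cross2_eqd, h, h2]; ring

lemma convex_halfplane (e : ℝ) (d c : E2) :
    Convex ℝ {w : E2 | e * cross2 d (w - c) ≤ 0} := by
  intro w1 hw1 w2 hw2 a b ha hb hab
  simp only [Set.mem_setOf_eq] at *
  have hb' : b = 1 - a := by linarith
  subst hb'
  have ha1 : a = 1 - (1 - a) := by ring
  rw [show a • w1 + (1 - a) • w2 = (1 - (1-a)) • w1 + (1-a) • w2 by rw [← ha1]]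
  rw [cross2_sub_affine]
  nlinarith

lemma hull3_sub (e : ℝ) (d c : E2) (u1 u2 u3 : E2)
    (h1 : e * cross2 d (u1 - c) ≤ 0) (h2 : e * cross2 d (u2 - c) ≤ 0)
    (h3 : e * cross2 d (u3 - c) ≤ 0) :
    convexHull ℝ {u1, u2, u3} ⊆ {w : E2 | e * cross2 d (w - c) ≤ 0} := by
  apply convexHull_min _ (convex_halfplane e d c)
  intro w hw
  simp only [Set.mem_insert_iff, Set.mem_singleton_iff] at hw
  rcases hw with rfl | rfl | rfl <;> assumption

lemma interior_strict {e : ℝ} (he : e ≠ 0) {d c : E2} (hd : d ≠ 0) {s : Set E2}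
    (hsub : s ⊆ {w : E2 | e * cross2 d (w - c) ≤ 0}) {z : E2} (hz : z ∈ interior s) :
    e * cross2 d (z - c) < 0 := by
  have hle : e * cross2 d (z - c) ≤ 0 := hsub (interior_subset hz)
  rcases lt_or_eq_of_le hle with h | h
  · exact h
  · exfalso
    set e' : E2 := (WithLp.equiv 2 (Fin 2 → ℝ)).symm ![e * (-(d 1)), e * (d 0)] with he'
    have he'0 : e' 0 = e * (-(d 1)) := by simp [he', WithLp.equiv_symm_apply, PiLp.toLp_apply]
    have he'1 : e' 1 = e * (d 0) := by simp [he', WithLp.equiv_symm_apply, PiLp.toLp_apply]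
    have hpos : 0 < e * cross2 d e' := by
      rw [cross2_eqd, he'0, he'1]
      have hrw : e * (d 0 * (e * d 0) - d 1 * (e * -d 1)) = e^2 * ((d 0)^2 + (d 1)^2) := by ring
      rw [hrw]
      have hd2 : 0 < (d 0)^2 + (d 1)^2 := by
        rcases (e2_ne_zero_iff d).mp hd with h0 | h0 <;> positivity
      positivity
    have hcont : Filter.Tendsto (fun t : ℝ => z + t • e') (nhds 0) (nhds z) := by
      have hC : Continuous (fun t : ℝ => z + t • e') :=
        continuous_const.add (continuous_id.smul continuous_const)
      have h0 : z + (0:ℝ) • e' = z := by simp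
      simpa [h0] using hC.tendsto 0
    have hs : s ∈ nhds z := mem_interior_iff_mem_nhds.mp hz
    have hpre : (fun t : ℝ => z + t • e') ⁻¹' s ∈ nhds (0:ℝ) := hcont hs
    obtain ⟨δ, hδ0, hδ⟩ := Metric.mem_nhds_iff.mp hpre
    have hmem : z + (δ/2) • e' ∈ s := by
      apply hδ
      have hdist : dist (δ/2) (0:ℝ) < δ := by
        rw [Real.dist_eq, sub_zero, abs_of_pos (by linarith : (0:ℝ) < δ/2)]
        linarith
      simpa [Metric.mem_ball] using hdist
    have hfin := hsub hmem
    simp only [Set.mem_setOf_eq] at hfin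
    rw [cross2_add_smul] at hfin
    nlinarith

/-- The structured representation of a point of `S i`. -/
def SRep (p : ℕ → E2) (N i : ℕ) (x : E2) : Prop :=
  ∃ A C w : E2, ∃ t : ℝ,
    IsCombo A (p 1) (p i) ∧ IsCombo A (p (i-1)) (p (i+1)) ∧
    IsCombo C (p i) (p N) ∧ IsCombo C (p (i-1)) (p (i+1)) ∧
    IsCombo w A C ∧ 0 ≤ t ∧ t < 1 ∧ x = (1 - t) • p i + t • w

end SepAux

open SepAux

set_option maxHeartbeats 2000000

/-- Visibility property of the point set: for points `p 1, …, p N` ordered along a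
half-circle with center `O`, with each `S j` contained in the interiors of the
triangles `p (j-1) p j p (j+1)` and `p 1 p j p N` (and `S 1 = S N = ∅`), any two
points `x ∈ {p l} ∪ S l` and `y ∈ {p j} ∪ S j` with `l < q < j` are distinct, all of
`{p q} ∪ S q` lies strictly in one of the two open half-planes bounded by the line
through `x` and `y`, and `O` does not lie in that open half-plane. -/
theorem separation_property (O : E2) (r : ℝ) (hr : 0 < r) (θ₀ : ℝ)
    (N : ℕ) (hN : 3 ≤ N) (θ : ℕ → ℝ) (p : ℕ → E2) (S : ℕ → Set E2)
    (hmono : StrictMonoOn θ (Set.Icc 1 N) ∨ StrictAntiOn θ (Set.Icc 1 N))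
    (hθ : ∀ i ∈ Set.Icc 1 N, θ i ∈ Set.Icc θ₀ (θ₀ + Real.pi))
    (hp : ∀ i ∈ Set.Icc 1 N, p i = circPt O r (θ i))
    (hS : ∀ j : ℕ, 2 ≤ j → j ≤ N - 1 →
      S j ⊆ interior (convexHull ℝ {p (j - 1), p j, p (j + 1)}) ∧
      S j ⊆ interior (convexHull ℝ {p 1, p j, p N}))
    (hS1 : S 1 = ∅) (hSN : S N = ∅) :
    ∀ l q j : ℕ, 1 ≤ l → l < q → q < j → j ≤ N →
      ∀ x ∈ insert (p l) (S l), ∀ y ∈ insert (p j) (S j),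
        x ≠ y ∧
        ∃ s : ℝ, (s = 1 ∨ s = -1) ∧
          (∀ z ∈ insert (p q) (S q), 0 < s * cross2 (y - x) (z - x)) ∧
          ¬ (0 < s * cross2 (y - x) (O - x)) := by
  -- base sign data
  obtain ⟨ε, hεpm, B1, B1s, HO⟩ : ∃ ε : ℝ, (ε = 1 ∨ ε = -1) ∧
      (∀ a b c : ℕ, 1 ≤ a → a ≤ c → c ≤ b → b ≤ N → 0 ≤ ε * Fc (p a) (p b) (p c)) ∧
      (∀ a b c : ℕ, 1 ≤ a → a < c → c < b → b ≤ N → 0 < ε * Fc (p a) (p b) (p c)) ∧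
      (∀ a b : ℕ, 1 ≤ a → a ≤ b → b ≤ N → ε * Fc (p a) (p b) O ≤ 0) := by
    rcases hmono with hm | hm
    · refine ⟨-1, Or.inr rfl, ?_, ?_, ?_⟩
      · intro a b c h1 h2 h3 h4
        have ha : a ∈ Set.Icc 1 N := Set.mem_Icc.mpr ⟨h1, by omega⟩
        have hb : b ∈ Set.Icc 1 N := Set.mem_Icc.mpr ⟨by omega, h4⟩
        have hc : c ∈ Set.Icc 1 N := Set.mem_Icc.mpr ⟨by omega, by omega⟩
        rw [hp a ha, hp b hb, hp c hc, T1eq]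
        have h5 : θ a ≤ θ c := hm.monotoneOn ha hc h2
        have h6 : θ c ≤ θ b := hm.monotoneOn hc hb h3
        have h7 : θ b - θ a ≤ Real.pi := by
          have w1 := hθ a ha; have w2 := hθ b hb
          simp only [Set.mem_Icc] at w1 w2; linarith
        have := trig_le h5 h6 h7
        nlinarith [sq_nonneg r]
      · intro a b c h1 h2 h3 h4
        have ha : a ∈ Set.Icc 1 N := Set.mem_Icc.mpr ⟨h1, by omega⟩
        have hb : b ∈ Set.Icc 1 N := Set.mem_Icc.mpr ⟨by omega, h4⟩
        have hc : c ∈ Set.Icc 1 N := Set.mem_Icc.mpr ⟨by omega, by omega⟩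
        rw [hp a ha, hp b hb, hp c hc, T1eq]
        have h5 : θ a < θ c := hm ha hc h2
        have h6 : θ c < θ b := hm hc hb h3
        have h7 : θ b - θ a ≤ Real.pi := by
          have w1 := hθ a ha; have w2 := hθ b hb
          simp only [Set.mem_Icc] at w1 w2; linarith
        have := trig_lt h5 h6 h7
        nlinarith [pow_pos hr 2]
      · intro a b h1 h2 h3
        have ha : a ∈ Set.Icc 1 N := Set.mem_Icc.mpr ⟨h1, by omega⟩
        have hb : b ∈ Set.Icc 1 N := Set.mem_Icc.mpr ⟨by omega, h3⟩
        rw [hp a ha, hp b hb, T2eq]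
        have h5 : θ a ≤ θ b := hm.monotoneOn ha hb h2
        have h7 : θ b - θ a ≤ Real.pi := by
          have w1 := hθ a ha; have w2 := hθ b hb
          simp only [Set.mem_Icc] at w1 w2; linarith
        have := Real.sin_nonneg_of_nonneg_of_le_pi (by linarith : 0 ≤ θ b - θ a) h7
        nlinarith [sq_nonneg r]
    · refine ⟨1, Or.inl rfl, ?_, ?_, ?_⟩
      · intro a b c h1 h2 h3 h4
        have ha : a ∈ Set.Icc 1 N := Set.mem_Icc.mpr ⟨h1, by omega⟩
        have hb : b ∈ Set.Icc 1 N := Set.mem_Icc.mpr ⟨by omega, h4⟩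
        have hc : c ∈ Set.Icc 1 N := Set.mem_Icc.mpr ⟨by omega, by omega⟩
        rw [hp a ha, hp b hb, hp c hc, T1eq]
        have h5 : θ c ≤ θ a := hm.antitoneOn ha hc h2
        have h6 : θ b ≤ θ c := hm.antitoneOn hc hb h3
        have h7 : θ a - θ b ≤ Real.pi := by
          have w1 := hθ a ha; have w2 := hθ b hb
          simp only [Set.mem_Icc] at w1 w2; linarith
        have hE := trig_le h6 h5 h7
        have e1 : Real.sin (θ c - θ b) = -Real.sin (θ b - θ c) := by
          rw [← Real.sin_neg]; ring_nf
        have e2 : Real.sin (θ b - θ a) = -Real.sin (θ a - θ b) := by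
          rw [← Real.sin_neg]; ring_nf
        have e3 : Real.sin (θ a - θ c) = -Real.sin (θ c - θ a) := by
          rw [← Real.sin_neg]; ring_nf
        rw [e1, e2, e3]
        nlinarith [sq_nonneg r]
      · intro a b c h1 h2 h3 h4
        have ha : a ∈ Set.Icc 1 N := Set.mem_Icc.mpr ⟨h1, by omega⟩
        have hb : b ∈ Set.Icc 1 N := Set.mem_Icc.mpr ⟨by omega, h4⟩
        have hc : c ∈ Set.Icc 1 N := Set.mem_Icc.mpr ⟨by omega, by omega⟩
        rw [hp a ha, hp b hb, hp c hc, T1eq]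
        have h5 : θ c < θ a := hm ha hc h2
        have h6 : θ b < θ c := hm hc hb h3
        have h7 : θ a - θ b ≤ Real.pi := by
          have w1 := hθ a ha; have w2 := hθ b hb
          simp only [Set.mem_Icc] at w1 w2; linarith
        have hE := trig_lt h6 h5 h7
        have e1 : Real.sin (θ c - θ b) = -Real.sin (θ b - θ c) := by
          rw [← Real.sin_neg]; ring_nf
        have e2 : Real.sin (θ b - θ a) = -Real.sin (θ a - θ b) := by
          rw [← Real.sin_neg]; ring_nf
        have e3 : Real.sin (θ a - θ c) = -Real.sin (θ c - θ a) := by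
          rw [← Real.sin_neg]; ring_nf
        rw [e1, e2, e3]
        nlinarith [pow_pos hr 2]
      · intro a b h1 h2 h3
        have ha : a ∈ Set.Icc 1 N := Set.mem_Icc.mpr ⟨h1, by omega⟩
        have hb : b ∈ Set.Icc 1 N := Set.mem_Icc.mpr ⟨by omega, h3⟩
        rw [hp a ha, hp b hb, T2eq]
        have h5 : θ b ≤ θ a := hm.antitoneOn ha hb h2
        have h7 : θ a - θ b ≤ Real.pi := by
          have w1 := hθ a ha; have w2 := hθ b hb
          simp only [Set.mem_Icc] at w1 w2; linarith
        have hneg : Real.sin (θ b - θ a) ≤ 0 := by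
          have : Real.sin (θ b - θ a) = -Real.sin (θ a - θ b) := by
            rw [← Real.sin_neg]; ring_nf
          rw [this]
          have := Real.sin_nonneg_of_nonneg_of_le_pi (by linarith : 0 ≤ θ a - θ b) h7
          linarith
        nlinarith [sq_nonneg r]
  have hε0 : ε ≠ 0 := by rcases hεpm with rfl | rfl <;> norm_num
  -- derived sign lemmas
  have outHi : ∀ a b c : ℕ, 1 ≤ a → a ≤ b → b ≤ c → c ≤ N →
      ε * Fc (p a) (p b) (p c) ≤ 0 := by
    intro a b c h1 h2 h3 h4
    have h := B1 a c b h1 h2 h3 h4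
    have e := Fc_swap_yz (p a) (p c) (p b)
    rw [show Fc (p a) (p b) (p c) = -Fc (p a) (p c) (p b) from e] at *
    nlinarith
  have outHis : ∀ a b c : ℕ, 1 ≤ a → a < b → b < c → c ≤ N →
      ε * Fc (p a) (p b) (p c) < 0 := by
    intro a b c h1 h2 h3 h4
    have h := B1s a c b h1 h2 h3 h4
    have e := Fc_swap_yz (p a) (p c) (p b)
    rw [show Fc (p a) (p b) (p c) = -Fc (p a) (p c) (p b) from e] at *
    nlinarith
  have B2 : ∀ a b c : ℕ, 1 ≤ c → c ≤ a → a ≤ b → b ≤ N →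
      ε * Fc (p a) (p b) (p c) ≤ 0 := by
    intro a b c h1 h2 h3 h4
    have h := B1 c b a h1 h2 h3 h4
    have e := Fc_swap_xz (p c) (p b) (p a)
    rw [show Fc (p a) (p b) (p c) = -Fc (p c) (p b) (p a) from e] at *
    nlinarith
  have B2s : ∀ a b c : ℕ, 1 ≤ c → c < a → a < b → b ≤ N →
      ε * Fc (p a) (p b) (p c) < 0 := by
    intro a b c h1 h2 h3 h4
    have h := B1s c b a h1 h2 h3 h4
    have e := Fc_swap_xz (p c) (p b) (p a)
    rw [show Fc (p a) (p b) (p c) = -Fc (p c) (p b) (p a) from e] at *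
    nlinarith
  have M1 : ∀ a b c : ℕ, 1 ≤ b → b ≤ a → a ≤ c → c ≤ N →
      0 ≤ ε * Fc (p a) (p b) (p c) := by
    intro a b c h1 h2 h3 h4
    have h := outHi b a c h1 h2 h3 h4
    have e := Fc_swap_xy (p b) (p a) (p c)
    rw [show Fc (p a) (p b) (p c) = -Fc (p b) (p a) (p c) from e] at *
    nlinarith
  have M2 : ∀ a b c : ℕ, 1 ≤ c → c ≤ b → b ≤ a → a ≤ N →
      0 ≤ ε * Fc (p a) (p b) (p c) := by
    intro a b c h1 h2 h3 h4
    have h := outHi c b a h1 h2 h3 h4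
    have e := Fc_swap_xz (p c) (p b) (p a)
    rw [show Fc (p a) (p b) (p c) = -Fc (p c) (p b) (p a) from e] at *
    nlinarith
  have pne : ∀ a b : ℕ, 1 ≤ a → a < b → b ≤ N → p a ≠ p b := by
    intro a b h1 h2 h3
    have ha : a ∈ Set.Icc 1 N := Set.mem_Icc.mpr ⟨h1, by omega⟩
    have hb : b ∈ Set.Icc 1 N := Set.mem_Icc.mpr ⟨by omega, h3⟩
    have h7 : θ b - θ a ≤ Real.pi ∧ θ a - θ b ≤ Real.pi := by
      have w1 := hθ a ha; have w2 := hθ b hb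
      simp only [Set.mem_Icc] at w1 w2; constructor <;> linarith
    rw [hp a ha, hp b hb]
    rcases hmono with hm | hm
    · exact circPt_ne O hr (hm ha hb h2) h7.1
    · exact (circPt_ne O hr (hm ha hb h2) h7.2).symm
  -- region representation
  have regionRep : ∀ i : ℕ, 2 ≤ i → i + 1 ≤ N → ∀ z ∈ S i, SRep p N i z := by
    intro i hi2 hiN z hzS
    obtain ⟨hT1sub, hT2sub⟩ := hS i hi2 (by omega)
    have hz1 := hT1sub hzS
    have hz2 := hT2sub hzS
    have hd1 : p i - p 1 ≠ 0 := sub_ne_zero.mpr (pne 1 i le_rfl (by omega) (by omega)).symm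
    have hd2 : p N - p i ≠ 0 := sub_ne_zero.mpr (pne i N (by omega) (by omega) le_rfl).symm
    have hdψ : p (i+1) - p (i-1) ≠ 0 :=
      sub_ne_zero.mpr (pne (i-1) (i+1) (by omega) (by omega) (by omega)).symm
    -- strict half-plane facts
    have hg1z : ε * Fc (p 1) (p i) z < 0 := by
      refine interior_strict hε0 hd1 (hull3_sub ε (p i - p 1) (p 1) (p 1) (p i) (p N)
        ?_ ?_ ?_) hz2
      · show ε * Fc (p 1) (p i) (p 1) ≤ 0
        rw [Fc_self_xz]; simp
      · show ε * Fc (p 1) (p i) (p i) ≤ 0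
        rw [Fc_self_yz]; simp
      · show ε * Fc (p 1) (p i) (p N) ≤ 0
        exact outHi 1 i N le_rfl (by omega) (by omega) le_rfl
    have hg2z : ε * Fc (p i) (p N) z < 0 := by
      refine interior_strict hε0 hd2 (hull3_sub ε (p N - p i) (p i) (p 1) (p i) (p N)
        ?_ ?_ ?_) hz2
      · show ε * Fc (p i) (p N) (p 1) ≤ 0
        exact B2 i N 1 le_rfl (by omega) (by omega) le_rfl
      · show ε * Fc (p i) (p N) (p i) ≤ 0
        rw [Fc_self_xz]; simp
      · show ε * Fc (p i) (p N) (p N) ≤ 0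
        rw [Fc_self_yz]; simp
    have hψz : 0 < ε * Fc (p (i-1)) (p (i+1)) z := by
      have h := interior_strict (e := -ε) (by simpa using hε0) hdψ
        (hull3_sub (-ε) (p (i+1) - p (i-1)) (p (i-1)) (p (i-1)) (p i) (p (i+1))
          ?_ ?_ ?_) hz1
      · have : -ε * Fc (p (i-1)) (p (i+1)) z < 0 := h
        linarith
      · show -ε * Fc (p (i-1)) (p (i+1)) (p (i-1)) ≤ 0
        rw [Fc_self_xz]; simp
      · show -ε * Fc (p (i-1)) (p (i+1)) (p i) ≤ 0
        have := B1s (i-1) (i+1) i (by omega) (by omega) (by omega) (by omega)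
        linarith
      · show -ε * Fc (p (i-1)) (p (i+1)) (p (i+1)) ≤ 0
        rw [Fc_self_yz]; simp
    -- closed decomposition
    have hzT1 : z ∈ convexHull ℝ {p (i-1), p i, p (i+1)} := interior_subset hz1
    have hset : ({p (i-1), p i, p (i+1)} : Set E2) = insert (p i) {p (i-1), p (i+1)} :=
      Set.insert_comm _ _ _
    rw [hset, convexHull_insert ⟨p (i-1), Set.mem_insert _ _⟩] at hzT1
    obtain ⟨xi, hxi, w0, hw0, hseg⟩ := mem_convexJoin.mp hzT1
    rw [Set.mem_singleton_iff] at hxi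
    subst hxi
    rw [convexHull_pair] at hw0
    obtain ⟨a, b, ha, hb, hab, hcomb⟩ := hseg
    obtain ⟨a', b', ha', hb', hab', hw0comb⟩ := hw0
    have hzeq : z = (1 - b) • p i + b • w0 := by
      rw [← hcomb, show a = 1 - b from by linarith]
    have hw0eq : w0 = (1 - b') • p (i-1) + b' • p (i+1) := by
      rw [← hw0comb, show a' = 1 - b' from by linarith]
    have hψw0 : ε * Fc (p (i-1)) (p (i+1)) w0 = 0 := by
      rw [hw0eq, Fc_aff_z, Fc_self_xz, Fc_self_yz]; ring
    have hb1 : b < 1 := by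
      rcases lt_or_ge b 1 with h | h
      · exact h
      · exfalso
        have hb1' : b = 1 := by linarith
        have : z = w0 := by rw [hzeq, hb1']; simp
        rw [this] at hψz; linarith
    have hb0 : 0 < b := by
      rcases lt_or_ge 0 b with h | h
      · exact h
      · exfalso
        have hb0' : b = 0 := by linarith
        have : z = p i := by rw [hzeq, hb0']; simp
        rw [this, Fc_self_yz] at hg1z; simp at hg1z
    have hg1w0 : ε * Fc (p 1) (p i) w0 < 0 := by
      have hexp : Fc (p 1) (p i) z = (1 - b) * Fc (p 1) (p i) (p i) + b * Fc (p 1) (p i) w0 := by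
        rw [hzeq, Fc_aff_z]
      rw [Fc_self_yz] at hexp
      by_contra hcon
      push_neg at hcon
      have h2 : 0 ≤ b * (ε * Fc (p 1) (p i) w0) := mul_nonneg (le_of_lt hb0) hcon
      have h3 : ε * Fc (p 1) (p i) z = b * (ε * Fc (p 1) (p i) w0) := by
        rw [hexp]; ring
      linarith
    have hg2w0 : ε * Fc (p i) (p N) w0 < 0 := by
      have hexp : Fc (p i) (p N) z = (1 - b) * Fc (p i) (p N) (p i) + b * Fc (p i) (p N) w0 := by
        rw [hzeq, Fc_aff_z]
      rw [Fc_self_xz] at hexp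
      by_contra hcon
      push_neg at hcon
      have h2 : 0 ≤ b * (ε * Fc (p i) (p N) w0) := mul_nonneg (le_of_lt hb0) hcon
      have h3 : ε * Fc (p i) (p N) z = b * (ε * Fc (p i) (p N) w0) := by
        rw [hexp]; ring
      linarith
    -- the roots
    have hX0 : 0 ≤ ε * Fc (p 1) (p i) (p (i-1)) :=
      B1 1 i (i-1) le_rfl (by omega) (by omega) (by omega)
    have hX1 : ε * Fc (p 1) (p i) (p (i+1)) < 0 :=
      outHis 1 i (i+1) le_rfl (by omega) (by omega) (by omega)
    have hY0 : ε * Fc (p i) (p N) (p (i-1)) < 0 := by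
      have h := B1s (i-1) N i (by omega) (by omega) (by omega) le_rfl
      have e := Fc_swap_xz (p (i-1)) (p N) (p i)
      rw [show Fc (p i) (p N) (p (i-1)) = -Fc (p (i-1)) (p N) (p i) from e]
      nlinarith
    have hY1 : 0 ≤ ε * Fc (p i) (p N) (p (i+1)) :=
      B1 i N (i+1) (by omega) (by omega) (by omega) le_rfl
    have hexp1 : ε * Fc (p 1) (p i) w0
        = (1 - b') * (ε * Fc (p 1) (p i) (p (i-1))) + b' * (ε * Fc (p 1) (p i) (p (i+1))) := by
      rw [hw0eq, Fc_aff_z]; ring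
    have hexp2 : ε * Fc (p i) (p N) w0
        = (1 - b') * (ε * Fc (p i) (p N) (p (i-1))) + b' * (ε * Fc (p i) (p N) (p (i+1))) := by
      rw [hw0eq, Fc_aff_z]; ring
    set X0 := ε * Fc (p 1) (p i) (p (i-1)) with hX0d
    set X1 := ε * Fc (p 1) (p i) (p (i+1)) with hX1d
    set Y0 := ε * Fc (p i) (p N) (p (i-1)) with hY0d
    set Y1 := ε * Fc (p i) (p N) (p (i+1)) with hY1d
    have hdenA : 0 < X0 - X1 := by linarith
    have hdenC : 0 < Y1 - Y0 := by linarith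
    set ta := X0 / (X0 - X1) with htad
    set tc := (-Y0) / (Y1 - Y0) with htcd
    have hta0 : 0 ≤ ta := div_nonneg hX0 (le_of_lt hdenA)
    have hta1 : ta < 1 := by rw [htad, div_lt_one hdenA]; linarith
    have htc0 : 0 < tc := div_pos (by linarith) hdenC
    have htc1 : tc ≤ 1 := by rw [htcd, div_le_one hdenC]; linarith
    have htab : ta < b' := by
      rw [htad, div_lt_iff₀ hdenA]; nlinarith [hg1w0, hexp1]
    have htbc : b' < tc := by
      rw [htcd, lt_div_iff₀ hdenC]; nlinarith [hg2w0, hexp2]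
    set A : E2 := (1 - ta) • p (i-1) + ta • p (i+1) with hAdef
    set C : E2 := (1 - tc) • p (i-1) + tc • p (i+1) with hCdef
    have hg1A : ε * Fc (p 1) (p i) A = 0 := by
      rw [hAdef, Fc_aff_z, htad]
      field_simp
      ring
    have hg2C : ε * Fc (p i) (p N) C = 0 := by
      rw [hCdef, Fc_aff_z, htcd]
      field_simp
      ring
    -- A is on the chord from p 1 to p i
    have hψ1 : ε * Fc (p (i-1)) (p (i+1)) (p 1) ≤ 0 :=
      B2 (i-1) (i+1) 1 le_rfl (by omega) (by omega) (by omega)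
    have hψi : 0 < ε * Fc (p (i-1)) (p (i+1)) (p i) :=
      B1s (i-1) (i+1) i (by omega) (by omega) (by omega) (by omega)
    have hψN : ε * Fc (p (i-1)) (p (i+1)) (p N) ≤ 0 :=
      outHi (i-1) (i+1) N (by omega) (by omega) (by omega) le_rfl
    have hAcomb : IsCombo A (p 1) (p i) := by
      have hpar : cross2 (p i - p 1) (A - p 1) = 0 := by
        have : ε * Fc (p 1) (p i) A = 0 := hg1A
        have h2 : Fc (p 1) (p i) A = 0 := by
          rcases mul_eq_zero.mp this with h | h
          · exact absurd h hε0
          · exact h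
        exact h2
      obtain ⟨uA, huA⟩ := cross2_zero_parallel hpar hd1
      have hAeq : A = (1 - uA) • p 1 + uA • p i := by
        have hk : ∀ k : Fin 2, A k = (1 - uA) * (p 1) k + uA * (p i) k := by
          intro k
          have h := congrArg (fun w : E2 => w k) huA
          simp only [PiLp.sub_apply, PiLp.smul_apply, smul_eq_mul] at h
          linarith [h]
        ext k
        rw [combo_apply]
        exact hk k
      have hψA : ε * Fc (p (i-1)) (p (i+1)) A = 0 := by
        rw [hAdef, Fc_aff_z, Fc_self_xz, Fc_self_yz]; ring
      have hψAexp : ε * Fc (p (i-1)) (p (i+1)) A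
          = (1 - uA) * (ε * Fc (p (i-1)) (p (i+1)) (p 1))
            + uA * (ε * Fc (p (i-1)) (p (i+1)) (p i)) := by
        rw [hAeq, Fc_aff_z]; ring
      refine ⟨uA, ?_, ?_, hAeq⟩
      · by_contra hcon
        push_neg at hcon
        have h1 : uA * (ε * Fc (p (i-1)) (p (i+1)) (p i)) < 0 :=
          mul_neg_of_neg_of_pos hcon hψi
        have h2 : (1 - uA) * (ε * Fc (p (i-1)) (p (i+1)) (p 1)) ≤ 0 := by
          nlinarith [mul_nonneg (by linarith : (0:ℝ) ≤ 1 - uA)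
            (by linarith : 0 ≤ -(ε * Fc (p (i-1)) (p (i+1)) (p 1)))]
        linarith [hψA, hψAexp]
      · by_contra hcon
        push_neg at hcon
        have h1 : 0 < uA * (ε * Fc (p (i-1)) (p (i+1)) (p i)) :=
          mul_pos (by linarith) hψi
        have h2 : 0 ≤ (1 - uA) * (ε * Fc (p (i-1)) (p (i+1)) (p 1)) := by nlinarith
        linarith [hψA, hψAexp]
    have hCcomb : IsCombo C (p i) (p N) := by
      have hpar : cross2 (p N - p i) (C - p i) = 0 := by
        have h2 : Fc (p i) (p N) C = 0 := by
          rcases mul_eq_zero.mp hg2C with h | h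
          · exact absurd h hε0
          · exact h
        exact h2
      obtain ⟨vC, hvC⟩ := cross2_zero_parallel hpar hd2
      have hCeq : C = (1 - vC) • p i + vC • p N := by
        have hk : ∀ k : Fin 2, C k = (1 - vC) * (p i) k + vC * (p N) k := by
          intro k
          have h := congrArg (fun w : E2 => w k) hvC
          simp only [PiLp.sub_apply, PiLp.smul_apply, smul_eq_mul] at h
          linarith [h]
        ext k
        rw [combo_apply]
        exact hk k
      have hψC : ε * Fc (p (i-1)) (p (i+1)) C = 0 := by
        rw [hCdef, Fc_aff_z, Fc_self_xz, Fc_self_yz]; ring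
      have hψCexp : ε * Fc (p (i-1)) (p (i+1)) C
          = (1 - vC) * (ε * Fc (p (i-1)) (p (i+1)) (p i))
            + vC * (ε * Fc (p (i-1)) (p (i+1)) (p N)) := by
        rw [hCeq, Fc_aff_z]; ring
      refine ⟨vC, ?_, ?_, hCeq⟩
      · by_contra hcon
        push_neg at hcon
        have h1 : vC * (ε * Fc (p (i-1)) (p (i+1)) (p N)) ≥ 0 := by nlinarith
        have h2 : 0 < (1 - vC) * (ε * Fc (p (i-1)) (p (i+1)) (p i)) :=
          mul_pos (by linarith) hψi
        linarith [hψC, hψCexp]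
      · by_contra hcon
        push_neg at hcon
        have h1 : vC * (ε * Fc (p (i-1)) (p (i+1)) (p N)) ≤ 0 := by nlinarith
        have h2 : (1 - vC) * (ε * Fc (p (i-1)) (p (i+1)) (p i)) < 0 := by nlinarith
        linarith [hψC, hψCexp]
    -- w0 is a combination of A and C
    have hdenAC : 0 < tc - ta := by linarith
    set sAC := (b' - ta) / (tc - ta) with hsd
    have hs0 : 0 ≤ sAC := div_nonneg (by linarith) (le_of_lt hdenAC)
    have hs1 : sAC ≤ 1 := by rw [hsd, div_le_one hdenAC]; linarith
    have hcoef : (1 - sAC) * ta + sAC * tc = b' := by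
      have hmul : sAC * (tc - ta) = b' - ta := by
        rw [hsd]; field_simp
      linear_combination hmul
    have hw0AC : w0 = (1 - sAC) • A + sAC • C := by
      rw [hAdef, hCdef, hw0eq]
      ext k
      simp only [combo_apply]
      linear_combination (p (i-1) k - p (i+1) k) * hcoef
    exact ⟨A, C, w0, b, hAcomb, ⟨ta, hta0, le_of_lt hta1, hAdef⟩, hCcomb,
      ⟨tc, le_of_lt htc0, htc1, hCdef⟩, ⟨sAC, hs0, hs1, hw0AC⟩, hb, hb1, hzeq⟩
  -- main part
  intro l q j hl hlq hqj hjN x hx y hy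
  have hq1 : 1 ≤ q - 1 := by omega
  -- case data for x and y
  have hxR : x = p l ∨ (2 ≤ l ∧ SRep p N l x) := by
    rcases Set.mem_insert_iff.mp hx with h | h
    · exact Or.inl h
    · have hl2 : 2 ≤ l := by
        rcases Nat.lt_or_ge l 2 with h' | h'
        · exfalso
          have : l = 1 := by omega
          rw [this, hS1] at h
          exact Set.notMem_empty x h
        · exact h'
      exact Or.inr ⟨hl2, regionRep l hl2 (by omega) x h⟩
  have hyR : y = p j ∨ (j + 1 ≤ N ∧ SRep p N j y) := by
    rcases Set.mem_insert_iff.mp hy with h | h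
    · exact Or.inl h
    · have hjN2 : j + 1 ≤ N := by
        rcases eq_or_lt_of_le hjN with rfl | h'
        · exfalso; rw [hSN] at h; exact Set.notMem_empty y h
        · omega
      exact Or.inr ⟨hjN2, regionRep j (by omega) hjN2 y h⟩
  -- the strict fact at p q
  have KPgen : ∀ a : ℕ, 1 ≤ a → a ≤ q → 0 ≤ ε * Fc (p a) y (p q) := by
    intro a h1 h2
    rcases hyR with rfl | ⟨hjN2, hSy⟩
    · exact B1 a j q h1 h2 (by omega) hjN
    · obtain ⟨A, C, w, t, hA1, hAn, hC1, hCn, hwAC, ht0, ht1, hyeq⟩ := hSy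
      have hAy : 0 ≤ ε * Fc (p a) A (p q) :=
        combo_y_nonneg hAn (B1 a (j-1) q h1 h2 (by omega) (by omega))
          (B1 a (j+1) q h1 h2 (by omega) hjN2)
      have hCy : 0 ≤ ε * Fc (p a) C (p q) :=
        combo_y_nonneg hCn (B1 a (j-1) q h1 h2 (by omega) (by omega))
          (B1 a (j+1) q h1 h2 (by omega) hjN2)
      have hwy : 0 ≤ ε * Fc (p a) w (p q) := combo_y_nonneg hwAC hAy hCy
      exact combo_y_nonneg ⟨t, ht0, le_of_lt ht1, hyeq⟩
        (B1 a j q h1 h2 (by omega) hjN) hwy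
  have KPgens : ∀ a : ℕ, 1 ≤ a → a < q → 0 < ε * Fc (p a) y (p q) := by
    intro a h1 h2
    rcases hyR with rfl | ⟨hjN2, hSy⟩
    · exact B1s a j q h1 h2 hqj hjN
    · obtain ⟨A, C, w, t, hA1, hAn, hC1, hCn, hwAC, ht0, ht1, hyeq⟩ := hSy
      have hAy : 0 ≤ ε * Fc (p a) A (p q) :=
        combo_y_nonneg hAn (B1 a (j-1) q h1 (by omega) (by omega) (by omega))
          (B1 a (j+1) q h1 (by omega) (by omega) hjN2)
      have hCy : 0 ≤ ε * Fc (p a) C (p q) :=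
        combo_y_nonneg hCn (B1 a (j-1) q h1 (by omega) (by omega) (by omega))
          (B1 a (j+1) q h1 (by omega) (by omega) hjN2)
      have hwy : 0 ≤ ε * Fc (p a) w (p q) := combo_y_nonneg hwAC hAy hCy
      exact combo_y_pos ht0 ht1 hyeq (B1s a j q h1 h2 hqj hjN) hwy
  have KP : 0 < ε * Fc x y (p q) := by
    rcases hxR with rfl | ⟨hl2, hSx⟩
    · exact KPgens l hl hlq
    · obtain ⟨A, C, w, t, hA1, hAn, hC1, hCn, hwAC, ht0, ht1, hxeq⟩ := hSx
      have hAx : 0 ≤ ε * Fc A y (p q) :=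
        combo_x_nonneg hAn (KPgen (l-1) (by omega) (by omega))
          (KPgen (l+1) (by omega) (by omega))
      have hCx : 0 ≤ ε * Fc C y (p q) :=
        combo_x_nonneg hCn (KPgen (l-1) (by omega) (by omega))
          (KPgen (l+1) (by omega) (by omega))
      have hwx : 0 ≤ ε * Fc w y (p q) := combo_x_nonneg hwAC hAx hCx
      exact combo_x_pos ht0 ht1 hxeq (KPgens l hl hlq) hwx
  -- the vertex A_q
  have KA : ∀ Aq : E2, IsCombo Aq (p 1) (p q) → IsCombo Aq (p (q-1)) (p (q+1)) →
      0 ≤ ε * Fc x y Aq := by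
    intro Aq hAqA hAqn
    have n_l_j : 0 ≤ ε * Fc (p l) (p j) Aq :=
      combo_z_nonneg hAqn (B1 l j (q-1) hl (by omega) (by omega) hjN)
        (B1 l j (q+1) hl (by omega) (by omega) hjN)
    have n_l_N : 0 ≤ ε * Fc (p l) (p N) Aq :=
      combo_z_nonneg hAqn (B1 l N (q-1) hl (by omega) (by omega) le_rfl)
        (B1 l N (q+1) hl (by omega) (by omega) le_rfl)
    have n_l_1 : 0 ≤ ε * Fc (p l) (p 1) Aq :=
      combo_z_nonneg hAqA (by rw [Fc_self_yz]; simp)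
        (M1 l 1 q le_rfl hl (by omega) (by omega))
    have n_1_j : 0 ≤ ε * Fc (p 1) (p j) Aq :=
      combo_z_nonneg hAqA (by rw [Fc_self_xz]; simp)
        (B1 1 j q le_rfl (by omega) (by omega) hjN)
    have n_1_N : 0 ≤ ε * Fc (p 1) (p N) Aq :=
      combo_z_nonneg hAqA (by rw [Fc_self_xz]; simp)
        (B1 1 N q le_rfl (by omega) (by omega) le_rfl)
    have n_1_1 : 0 ≤ ε * Fc (p 1) (p 1) Aq := by rw [Fc_self_xy]; simp
    have n_N : ∀ b : ℕ, q ≤ b → b ≤ N → 0 ≤ ε * Fc (p N) (p b) Aq := by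
      intro b hb1 hb2
      exact combo_z_nonneg hAqA (M2 N b 1 (by omega) (by omega) hb2 le_rfl)
        (M2 N b q (by omega) hb1 hb2 le_rfl)
    have H_l : 0 ≤ ε * Fc (p l) y Aq := by
      rcases hyR with rfl | ⟨hjN2, hSy⟩
      · exact n_l_j
      · obtain ⟨A, C, w, t, hA1, hAn, hC1, hCn, hwAC, ht0, ht1, hyeq⟩ := hSy
        have hAy : 0 ≤ ε * Fc (p l) A Aq := combo_y_nonneg hA1 n_l_1 n_l_j
        have hCy : 0 ≤ ε * Fc (p l) C Aq := combo_y_nonneg hC1 n_l_j n_l_N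
        have hwy : 0 ≤ ε * Fc (p l) w Aq := combo_y_nonneg hwAC hAy hCy
        exact combo_y_nonneg ⟨t, ht0, le_of_lt ht1, hyeq⟩ n_l_j hwy
    have H_1 : 0 ≤ ε * Fc (p 1) y Aq := by
      rcases hyR with rfl | ⟨hjN2, hSy⟩
      · exact n_1_j
      · obtain ⟨A, C, w, t, hA1, hAn, hC1, hCn, hwAC, ht0, ht1, hyeq⟩ := hSy
        have hAy : 0 ≤ ε * Fc (p 1) A Aq := combo_y_nonneg hA1 n_1_1 n_1_j
        have hCy : 0 ≤ ε * Fc (p 1) C Aq := combo_y_nonneg hC1 n_1_j n_1_N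
        have hwy : 0 ≤ ε * Fc (p 1) w Aq := combo_y_nonneg hwAC hAy hCy
        exact combo_y_nonneg ⟨t, ht0, le_of_lt ht1, hyeq⟩ n_1_j hwy
    have H_N : 0 ≤ ε * Fc (p N) y Aq := by
      rcases hyR with rfl | ⟨hjN2, hSy⟩
      · exact n_N j (by omega) hjN
      · obtain ⟨A, C, w, t, hA1, hAn, hC1, hCn, hwAC, ht0, ht1, hyeq⟩ := hSy
        have hAy : 0 ≤ ε * Fc (p N) A Aq :=
          combo_y_nonneg hAn (n_N (j-1) (by omega) (by omega)) (n_N (j+1) (by omega) hjN2)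
        have hCy : 0 ≤ ε * Fc (p N) C Aq :=
          combo_y_nonneg hCn (n_N (j-1) (by omega) (by omega)) (n_N (j+1) (by omega) hjN2)
        have hwy : 0 ≤ ε * Fc (p N) w Aq := combo_y_nonneg hwAC hAy hCy
        exact combo_y_nonneg ⟨t, ht0, le_of_lt ht1, hyeq⟩ (n_N j (by omega) hjN) hwy
    rcases hxR with rfl | ⟨hl2, hSx⟩
    · exact H_l
    · obtain ⟨A, C, w, t, hA1, hAn, hC1, hCn, hwAC, ht0, ht1, hxeq⟩ := hSx
      have hAx : 0 ≤ ε * Fc A y Aq := combo_x_nonneg hA1 H_1 H_l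
      have hCx : 0 ≤ ε * Fc C y Aq := combo_x_nonneg hC1 H_l H_N
      have hwx : 0 ≤ ε * Fc w y Aq := combo_x_nonneg hwAC hAx hCx
      exact combo_x_nonneg ⟨t, ht0, le_of_lt ht1, hxeq⟩ H_l hwx
  -- the vertex C_q
  have KC : ∀ Cq : E2, IsCombo Cq (p q) (p N) → IsCombo Cq (p (q-1)) (p (q+1)) →
      0 ≤ ε * Fc x y Cq := by
    intro Cq hCqC hCqn
    have m_l_j : 0 ≤ ε * Fc (p l) (p j) Cq :=
      combo_z_nonneg hCqn (B1 l j (q-1) hl (by omega) (by omega) hjN)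
        (B1 l j (q+1) hl (by omega) (by omega) hjN)
    have m_l_N : 0 ≤ ε * Fc (p l) (p N) Cq :=
      combo_z_nonneg hCqn (B1 l N (q-1) hl (by omega) (by omega) le_rfl)
        (B1 l N (q+1) hl (by omega) (by omega) le_rfl)
    have m_l_1 : 0 ≤ ε * Fc (p l) (p 1) Cq :=
      combo_z_nonneg hCqC (M1 l 1 q le_rfl hl (by omega) (by omega))
        (M1 l 1 N le_rfl hl (by omega) le_rfl)
    have m_1_j : 0 ≤ ε * Fc (p 1) (p j) Cq :=
      combo_z_nonneg hCqn (B1 1 j (q-1) le_rfl (by omega) (by omega) hjN)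
        (B1 1 j (q+1) le_rfl (by omega) (by omega) hjN)
    have m_1_N : 0 ≤ ε * Fc (p 1) (p N) Cq :=
      combo_z_nonneg hCqn (B1 1 N (q-1) le_rfl (by omega) (by omega) le_rfl)
        (B1 1 N (q+1) le_rfl (by omega) (by omega) le_rfl)
    have m_1_1 : 0 ≤ ε * Fc (p 1) (p 1) Cq := by rw [Fc_self_xy]; simp
    have m_N : ∀ b : ℕ, q ≤ b → b ≤ N → 0 ≤ ε * Fc (p N) (p b) Cq := by
      intro b hb1 hb2
      exact combo_z_nonneg hCqC (M2 N b q (by omega) hb1 hb2 le_rfl)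
        (by rw [Fc_self_xz]; simp)
    have H_l : 0 ≤ ε * Fc (p l) y Cq := by
      rcases hyR with rfl | ⟨hjN2, hSy⟩
      · exact m_l_j
      · obtain ⟨A, C, w, t, hA1, hAn, hC1, hCn, hwAC, ht0, ht1, hyeq⟩ := hSy
        have hAy : 0 ≤ ε * Fc (p l) A Cq := combo_y_nonneg hA1 m_l_1 m_l_j
        have hCy : 0 ≤ ε * Fc (p l) C Cq := combo_y_nonneg hC1 m_l_j m_l_N
        have hwy : 0 ≤ ε * Fc (p l) w Cq := combo_y_nonneg hwAC hAy hCy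
        exact combo_y_nonneg ⟨t, ht0, le_of_lt ht1, hyeq⟩ m_l_j hwy
    have H_1 : 0 ≤ ε * Fc (p 1) y Cq := by
      rcases hyR with rfl | ⟨hjN2, hSy⟩
      · exact m_1_j
      · obtain ⟨A, C, w, t, hA1, hAn, hC1, hCn, hwAC, ht0, ht1, hyeq⟩ := hSy
        have hAy : 0 ≤ ε * Fc (p 1) A Cq := combo_y_nonneg hA1 m_1_1 m_1_j
        have hCy : 0 ≤ ε * Fc (p 1) C Cq := combo_y_nonneg hC1 m_1_j m_1_N
        have hwy : 0 ≤ ε * Fc (p 1) w Cq := combo_y_nonneg hwAC hAy hCy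
        exact combo_y_nonneg ⟨t, ht0, le_of_lt ht1, hyeq⟩ m_1_j hwy
    have H_N : 0 ≤ ε * Fc (p N) y Cq := by
      rcases hyR with rfl | ⟨hjN2, hSy⟩
      · exact m_N j (by omega) hjN
      · obtain ⟨A, C, w, t, hA1, hAn, hC1, hCn, hwAC, ht0, ht1, hyeq⟩ := hSy
        have hAy : 0 ≤ ε * Fc (p N) A Cq :=
          combo_y_nonneg hAn (m_N (j-1) (by omega) (by omega)) (m_N (j+1) (by omega) hjN2)
        have hCy : 0 ≤ ε * Fc (p N) C Cq :=
          combo_y_nonneg hCn (m_N (j-1) (by omega) (by omega)) (m_N (j+1) (by omega) hjN2)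
        have hwy : 0 ≤ ε * Fc (p N) w Cq := combo_y_nonneg hwAC hAy hCy
        exact combo_y_nonneg ⟨t, ht0, le_of_lt ht1, hyeq⟩ (m_N j (by omega) hjN) hwy
    rcases hxR with rfl | ⟨hl2, hSx⟩
    · exact H_l
    · obtain ⟨A, C, w, t, hA1, hAn, hC1, hCn, hwAC, ht0, ht1, hxeq⟩ := hSx
      have hAx : 0 ≤ ε * Fc A y Cq := combo_x_nonneg hA1 H_1 H_l
      have hCx : 0 ≤ ε * Fc C y Cq := combo_x_nonneg hC1 H_l H_N
      have hwx : 0 ≤ ε * Fc w y Cq := combo_x_nonneg hwAC hAx hCx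
      exact combo_x_nonneg ⟨t, ht0, le_of_lt ht1, hxeq⟩ H_l hwx
  -- center is not on the strict side
  have KOy : ∀ a : ℕ, 1 ≤ a → a ≤ q → ε * Fc (p a) y O ≤ 0 := by
    intro a h1 h2
    rcases hyR with rfl | ⟨hjN2, hSy⟩
    · exact HO a j h1 (by omega) hjN
    · obtain ⟨A, C, w, t, hA1, hAn, hC1, hCn, hwAC, ht0, ht1, hyeq⟩ := hSy
      have hAy : ε * Fc (p a) A O ≤ 0 :=
        combo_y_nonpos hAn (HO a (j-1) h1 (by omega) (by omega))
          (HO a (j+1) h1 (by omega) hjN2)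
      have hCy : ε * Fc (p a) C O ≤ 0 :=
        combo_y_nonpos hCn (HO a (j-1) h1 (by omega) (by omega))
          (HO a (j+1) h1 (by omega) hjN2)
      have hwy : ε * Fc (p a) w O ≤ 0 := combo_y_nonpos hwAC hAy hCy
      exact combo_y_nonpos ⟨t, ht0, le_of_lt ht1, hyeq⟩ (HO a j h1 (by omega) hjN) hwy
  have KO : ε * Fc x y O ≤ 0 := by
    rcases hxR with rfl | ⟨hl2, hSx⟩
    · exact KOy l hl (by omega)
    · obtain ⟨A, C, w, t, hA1, hAn, hC1, hCn, hwAC, ht0, ht1, hxeq⟩ := hSx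
      have hAx : ε * Fc A y O ≤ 0 :=
        combo_x_nonpos hAn (KOy (l-1) (by omega) (by omega)) (KOy (l+1) (by omega) (by omega))
      have hCx : ε * Fc C y O ≤ 0 :=
        combo_x_nonpos hCn (KOy (l-1) (by omega) (by omega)) (KOy (l+1) (by omega) (by omega))
      have hwx : ε * Fc w y O ≤ 0 := combo_x_nonpos hwAC hAx hCx
      exact combo_x_nonpos ⟨t, ht0, le_of_lt ht1, hxeq⟩ (KOy l hl (by omega)) hwx
  refine ⟨?_, ε, hεpm, ?_, ?_⟩
  · intro heq
    rw [heq, Fc_self_xy] at KP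
    simp at KP
  · intro z hz
    rcases Set.mem_insert_iff.mp hz with rfl | hzS
    · exact KP
    · obtain ⟨A, C, w, t, hA1, hAn, hC1, hCn, hwAC, ht0, ht1, hzeq⟩ :=
        regionRep q (by omega) (by omega) z hzS
      have hA := KA A hA1 hAn
      have hC := KC C hC1 hCn
      have hw : 0 ≤ ε * Fc x y w := combo_z_nonneg hwAC hA hC
      exact combo_z_pos ht0 ht1 hzeq KP hw
  · intro hcon
    have : 0 < ε * Fc x y O := hcon
    linarith

end
end

section
/- Let Γ be a circle in ℝ² and let A be an arc of Γ of angular measure strictly less than π (less than a half-circle). Let p_1, …, p_m (m ≥ 3) be distinct points on A, ordered along the arc. Then p_1, …, p_m are in strictly convex position and appear in this order along the boundary of their convex hull, the internal angle of the polygon p_1 p_2 … p_m at p_1 (namely the angle ∠ p_2 p_1 p_m) and at p_m (namely ∠ p_{m−1} p_m p_1) are strictly less than π/2 (acute), and the internal angle at each p_i with 2 ≤ i ≤ m−1 (namely ∠ p_{i−1} p_i p_{i+1}) is strictly greater than π/2 (obtuse). -/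
open Set Metric Bornology
open scoped RealInnerProductSpace

noncomputable section

namespace ArcAux

lemma cross_formula (O : E2) (r a b c : ℝ) :
    cross2 (circPt O r a - circPt O r b) (circPt O r c - circPt O r b)
      = r^2 * (Real.sin (c-a) + Real.sin (a-b) + Real.sin (b-c)) := by
  simp [cross2, circPt, Real.sin_sub, PiLp.sub_apply]
  ring

lemma inner_formula (O : E2) (r a b c : ℝ) :
    ⟪circPt O r a - circPt O r b, circPt O r c - circPt O r b⟫
      = r^2 * (Real.cos (a-c) - Real.cos (a-b) - Real.cos (b-c) + 1) := by
  simp [circPt, PiLp.inner_apply, RCLike.inner_apply, Fin.sum_univ_two, PiLp.sub_apply,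
    Real.cos_sub]
  nlinarith [Real.sin_sq_add_cos_sq b]

lemma inner_center (O : E2) (r a b c : ℝ) :
    ⟪circPt O r a - O, circPt O r c - circPt O r b⟫
      = r^2 * (Real.cos (a-c) - Real.cos (a-b)) := by
  simp [circPt, PiLp.inner_apply, RCLike.inner_apply, Fin.sum_univ_two, PiLp.sub_apply,
    Real.cos_sub]
  ring

lemma cos_lt_one' {x : ℝ} (h1 : -(2*Real.pi) < x) (h2 : x < 2*Real.pi) (h0 : x ≠ 0) :
    Real.cos x < 1 :=
  lt_of_le_of_ne (Real.cos_le_one x)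
    (fun h => h0 ((Real.cos_eq_one_iff_of_lt_of_lt h1 h2).1 h))

lemma sin_ineq {x y : ℝ} (hx : 0 < x) (hy : 0 < y) (hxy : x + y < Real.pi) :
    Real.sin (x + y) < Real.sin x + Real.sin y := by
  have h1 : Real.sin x > 0 := Real.sin_pos_of_pos_of_lt_pi hx (by linarith)
  have h2 : Real.sin y > 0 := Real.sin_pos_of_pos_of_lt_pi hy (by linarith)
  have pi_pos := Real.pi_pos
  have h3 : Real.cos x < 1 := cos_lt_one' (by linarith) (by linarith) hx.ne'
  have h4 : Real.cos y < 1 := cos_lt_one' (by linarith) (by linarith) hy.ne'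
  rw [Real.sin_add]
  nlinarith [Real.cos_le_one x, Real.cos_le_one y]

lemma cos_one_sub (x : ℝ) : Real.cos x = 1 - 2 * Real.sin (x/2)^2 := by
  have := Real.cos_two_mul (x/2)
  rw [show 2*(x/2) = x by ring] at this
  nlinarith [Real.sin_sq_add_cos_sq (x/2)]

lemma half_angle (x y : ℝ) :
    Real.cos (x-y) - Real.cos x - Real.cos y + 1
      = 4 * Real.sin (x/2) * Real.sin (y/2) * Real.cos ((x-y)/2) := by
  rw [cos_one_sub x, cos_one_sub y, cos_one_sub (x - y),
    show (x-y)/2 = x/2 - y/2 by ring, Real.sin_sub, Real.cos_sub]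
  nlinarith [Real.sin_sq_add_cos_sq (x/2), Real.sin_sq_add_cos_sq (y/2)]

lemma angle_lt_pi_div_two {u v : E2} (hu : u ≠ 0) (hv : v ≠ 0) (h : 0 < ⟪u, v⟫) :
    InnerProductGeometry.angle u v < Real.pi / 2 := by
  rw [InnerProductGeometry.angle, Real.arccos_lt_pi_div_two]
  exact div_pos h (mul_pos (norm_pos_iff.2 hu) (norm_pos_iff.2 hv))

lemma pi_div_two_lt_angle {u v : E2} (hu : u ≠ 0) (hv : v ≠ 0) (h : ⟪u, v⟫ < 0) :
    Real.pi / 2 < InnerProductGeometry.angle u v := by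
  have h1 : Real.arcsin (⟪u, v⟫ / (‖u‖ * ‖v‖)) < 0 :=
    Real.arcsin_lt_zero.2
      (div_neg_of_neg_of_pos h (mul_pos (norm_pos_iff.2 hu) (norm_pos_iff.2 hv)))
  rw [InnerProductGeometry.angle, Real.arccos]
  linarith

lemma euclid_angle_lt {a b c : E2} (h1 : a - b ≠ 0) (h2 : c - b ≠ 0) (h : 0 < ⟪a - b, c - b⟫) :
    EuclideanGeometry.angle a b c < Real.pi / 2 := by
  rw [EuclideanGeometry.angle, vsub_eq_sub, vsub_eq_sub]
  exact angle_lt_pi_div_two h1 h2 h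

lemma euclid_angle_gt {a b c : E2} (h1 : a - b ≠ 0) (h2 : c - b ≠ 0) (h : ⟪a - b, c - b⟫ < 0) :
    Real.pi / 2 < EuclideanGeometry.angle a b c := by
  rw [EuclideanGeometry.angle, vsub_eq_sub, vsub_eq_sub]
  exact pi_div_two_lt_angle h1 h2 h

lemma extreme_of_strict_max (c x : E2) (A : Set E2) (hx : x ∈ A)
    (h : ∀ y ∈ A, y ≠ x → ⟪c, y⟫ < ⟪c, x⟫) :
    x ∈ (convexHull ℝ A).extremePoints ℝ := by
  set D : Set E2 := insert x {z | ⟪c, z⟫ < ⟪c, x⟫} with hDdef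
  have hDle : ∀ z ∈ D, ⟪c, z⟫ ≤ ⟪c, x⟫ := by
    rintro z (rfl | hz)
    · exact le_refl _
    · exact le_of_lt hz
  have hconv : Convex ℝ D := by
    intro u hu v hv a b ha hb hab
    rcases eq_or_lt_of_le ha with rfl | ha'
    · have hb1 : b = 1 := by linarith
      rw [zero_smul, zero_add, hb1, one_smul]; exact hv
    rcases eq_or_lt_of_le hb with rfl | hb'
    · have ha1 : a = 1 := by linarith
      rw [zero_smul, add_zero, ha1, one_smul]; exact hu
    have hiv : ⟪c, a • u + b • v⟫ = a * ⟪c, u⟫ + b * ⟪c, v⟫ := by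
      rw [inner_add_right, real_inner_smul_right, real_inner_smul_right]
    have hkey : ∀ U V : ℝ, U ≤ ⟪c, x⟫ → V ≤ ⟪c, x⟫ →
        (U < ⟪c, x⟫ ∨ V < ⟪c, x⟫) → a * U + b * V < ⟪c, x⟫ := by
      intro U V hU hV hor
      have hsum : a * ⟪c, x⟫ + b * ⟪c, x⟫ = ⟪c, x⟫ := by rw [← add_mul, hab, one_mul]
      rcases hor with h' | h'
      · have t1 := mul_lt_mul_of_pos_left h' ha'
        have t2 := mul_le_mul_of_nonneg_left hV hb
        linarith
      · have t1 := mul_le_mul_of_nonneg_left hU ha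
        have t2 := mul_lt_mul_of_pos_left h' hb'
        linarith
    rcases hu with hux | hu' <;> rcases hv with hvx | hv'
    · have hc : a • u + b • v = x := by rw [hux, hvx, ← add_smul, hab, one_smul]
      rw [hc]; exact Set.mem_insert _ _
    · refine Set.mem_insert_of_mem _ ?_
      show ⟪c, a • u + b • v⟫ < ⟪c, x⟫
      rw [hiv]; exact hkey _ _ (le_of_eq (by rw [hux])) (le_of_lt hv') (Or.inr hv')
    · refine Set.mem_insert_of_mem _ ?_
      show ⟪c, a • u + b • v⟫ < ⟪c, x⟫
      rw [hiv]; exact hkey _ _ (le_of_lt hu') (le_of_eq (by rw [hvx])) (Or.inl hu')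
    · refine Set.mem_insert_of_mem _ ?_
      show ⟪c, a • u + b • v⟫ < ⟪c, x⟫
      rw [hiv]; exact hkey _ _ (le_of_lt hu') (le_of_lt hv') (Or.inl hu')
  have hsub : convexHull ℝ A ⊆ D := by
    refine convexHull_min (fun y hy => ?_) hconv
    by_cases h' : y = x
    · subst h'; exact Set.mem_insert _ _
    · exact Set.mem_insert_of_mem _ (h y hy h')
  refine ⟨subset_convexHull ℝ A hx, ?_⟩
  rintro y hy z hz ⟨a, b, ha, hb, hab, hxyz⟩
  have h1 : ⟪c, y⟫ ≤ ⟪c, x⟫ := hDle y (hsub hy)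
  have h2 : ⟪c, z⟫ ≤ ⟪c, x⟫ := hDle z (hsub hz)
  have h3 : a * ⟪c, y⟫ + b * ⟪c, z⟫ = ⟪c, x⟫ := by
    rw [← hxyz, inner_add_right, real_inner_smul_right, real_inner_smul_right]
  have hsum : a * ⟪c, x⟫ + b * ⟪c, x⟫ = ⟪c, x⟫ := by rw [← add_mul, hab, one_mul]
  have h4 : ⟪c, y⟫ = ⟪c, x⟫ := by
    by_contra hne
    have hlt : ⟪c, y⟫ < ⟪c, x⟫ := lt_of_le_of_ne h1 hne
    have t1 := mul_lt_mul_of_pos_left hlt ha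
    have t2 := mul_le_mul_of_nonneg_left h2 hb.le
    linarith
  have h5 : ⟪c, z⟫ = ⟪c, x⟫ := by
    by_contra hne
    have hlt : ⟪c, z⟫ < ⟪c, x⟫ := lt_of_le_of_ne h2 hne
    have t1 := mul_le_mul_of_nonneg_left h1 ha.le
    have t2 := mul_lt_mul_of_pos_left hlt hb
    linarith
  rcases hsub hy with h' | hy'
  · exact h'
  · exact absurd h4 (ne_of_lt hy')

end ArcAux

open ArcAux

/-- Points `p 1, …, p m` (`m ≥ 3`) ordered along an arc of angular measure strictly
less than `π` are in strictly convex position, appear in this order along the boundary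
of their convex hull (all ordered triples have the same orientation), the internal
angles of the polygon at the first and last points are acute, and the internal angles
at all middle points are obtuse. -/
theorem arc_points_convex_position_angles (O : E2) (r : ℝ) (hr : 0 < r)
    (θ₀ α : ℝ) (hα0 : 0 ≤ α) (hαπ : α < Real.pi)
    (m : ℕ) (hm : 3 ≤ m) (θ : ℕ → ℝ) (p : ℕ → E2)
    (hmono : StrictMonoOn θ (Set.Icc 1 m) ∨ StrictAntiOn θ (Set.Icc 1 m))
    (hθ : ∀ i ∈ Set.Icc 1 m, θ i ∈ Set.Icc θ₀ (θ₀ + α))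
    (hp : ∀ i ∈ Set.Icc 1 m, p i = circPt O r (θ i)) :
    (∀ i ∈ Set.Icc 1 m,
      p i ∈ Set.extremePoints ℝ (convexHull ℝ (p '' Set.Icc 1 m))) ∧
    (∃ s : ℝ, (s = 1 ∨ s = -1) ∧
      ∀ i j k : ℕ, 1 ≤ i → i < j → j < k → k ≤ m →
        0 < s * cross2 (p j - p i) (p k - p i)) ∧
    EuclideanGeometry.angle (p 2) (p 1) (p m) < Real.pi / 2 ∧
    EuclideanGeometry.angle (p (m - 1)) (p m) (p 1) < Real.pi / 2 ∧
    (∀ i : ℕ, 2 ≤ i → i ≤ m - 1 →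
      Real.pi / 2 < EuclideanGeometry.angle (p (i - 1)) (p i) (p (i + 1))) := by
  have pi_pos := Real.pi_pos
  have hmem : ∀ i : ℕ, 1 ≤ i → i ≤ m → i ∈ Set.Icc 1 m := fun i h1 h2 => Set.mem_Icc.2 ⟨h1, h2⟩
  have hd : ∀ i ∈ Set.Icc 1 m, ∀ j ∈ Set.Icc 1 m, θ i - θ j ≤ α := by
    intro i hi j hj
    have h1 := hθ i hi; have h2 := hθ j hj
    rw [Set.mem_Icc] at h1 h2
    linarith [h1.2, h2.1]
  obtain ⟨σ, hσ, hord⟩ :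
      ∃ σ : ℝ, (σ = 1 ∨ σ = -1) ∧
        ∀ i ∈ Set.Icc 1 m, ∀ j ∈ Set.Icc 1 m, i < j → 0 < σ * (θ j - θ i) := by
    rcases hmono with h | h
    · exact ⟨1, Or.inl rfl, fun i hi j hj hij => by
        have := h hi hj hij; nlinarith⟩
    · exact ⟨-1, Or.inr rfl, fun i hi j hj hij => by
        have := h hi hj hij; nlinarith⟩
  have hσ2 : σ * σ = 1 := by rcases hσ with rfl | rfl <;> norm_num
  have hθne : ∀ a ∈ Set.Icc 1 m, ∀ b ∈ Set.Icc 1 m, a ≠ b → θ a ≠ θ b := by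
    intro a ha b hb hab
    rcases Nat.lt_or_ge a b with h' | h'
    · have := hord a ha b hb h'
      intro h0; rw [h0, sub_self, mul_zero] at this; exact lt_irrefl _ this
    · have hba : b < a := lt_of_le_of_ne h' (Ne.symm hab)
      have := hord b hb a ha hba
      intro h0; rw [h0, sub_self, mul_zero] at this; exact lt_irrefl _ this
  have hchord_ne : ∀ a ∈ Set.Icc 1 m, ∀ b ∈ Set.Icc 1 m, a ≠ b → p a - p b ≠ 0 := by
    intro a ha b hb hab
    have hne := hθne a ha b hb hab
    rw [hp a ha, hp b hb]
    have hda := hd a ha b hb; have hdb := hd b hb a ha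
    have hcos1 : Real.cos (θ a - θ b) < 1 :=
      cos_lt_one' (by linarith) (by linarith) (sub_ne_zero.2 hne)
    have hpos : 0 < ⟪circPt O r (θ a) - circPt O r (θ b),
        circPt O r (θ a) - circPt O r (θ b)⟫ := by
      rw [inner_formula]
      have h2 : Real.cos (θ b - θ a) = Real.cos (θ a - θ b) := by
        rw [show θ b - θ a = -(θ a - θ b) by ring, Real.cos_neg]
      rw [h2, sub_self, Real.cos_zero]
      nlinarith [pow_pos hr 2]
    exact fun h0 => by rw [h0] at hpos; simp at hpos
  have hsin : ∀ a ∈ Set.Icc 1 m, ∀ b ∈ Set.Icc 1 m, b < a →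
      0 < σ * Real.sin ((θ a - θ b)/2) := by
    intro a ha b hb hba
    have h1 := hord b hb a ha hba
    have h2 := hd a ha b hb
    have h3 := hd b hb a ha
    rcases hσ with rfl | rfl
    · have hx : 0 < θ a - θ b := by linarith
      have := Real.sin_pos_of_pos_of_lt_pi (x := (θ a - θ b)/2) (by linarith) (by linarith)
      linarith
    · have hx : θ a - θ b < 0 := by linarith
      have h5 : 0 < Real.sin ((θ b - θ a)/2) :=
        Real.sin_pos_of_pos_of_lt_pi (by linarith) (by linarith)
      have e : Real.sin ((θ a - θ b)/2) = - Real.sin ((θ b - θ a)/2) := by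
        rw [show (θ a - θ b)/2 = -((θ b - θ a)/2) by ring, Real.sin_neg]
      rw [e]; linarith
  have hcos : ∀ a ∈ Set.Icc 1 m, ∀ b ∈ Set.Icc 1 m, 0 < Real.cos ((θ a - θ b)/2) := by
    intro a ha b hb
    have h2 := hd a ha b hb; have h3 := hd b hb a ha
    exact Real.cos_pos_of_mem_Ioo ⟨by linarith, by linarith⟩
  refine ⟨?_, ⟨σ, hσ, ?_⟩, ?_, ?_, ?_⟩
  · -- extreme points
    intro i hi
    refine extreme_of_strict_max (p i - O) (p i) _ (Set.mem_image_of_mem p hi) ?_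
    rintro y ⟨j, hj, rfl⟩ hne
    have hne' : θ j ≠ θ i := by
      intro h0
      exact hne (by rw [hp j hj, hp i hi, h0])
    have hda := hd j hj i hi; have hdb := hd i hi j hj
    have hcos1 : Real.cos (θ i - θ j) < 1 :=
      cos_lt_one' (by linarith) (by linarith) (sub_ne_zero.2 (Ne.symm hne'))
    have key : ⟪p i - O, p j - p i⟫ < 0 := by
      rw [hp i hi, hp j hj, inner_center]
      rw [sub_self, Real.cos_zero]
      nlinarith [pow_pos hr 2]
    rw [inner_sub_right] at key
    linarith
  · -- cross products
    intro i j k h1 hij hjk hkm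
    have hi := hmem i h1 (by omega)
    have hj := hmem j (by omega) (by omega)
    have hk := hmem k (by omega) (by omega)
    rw [hp i hi, hp j hj, hp k hk, cross_formula]
    rcases hσ with rfl | rfl
    · have hx : 0 < θ j - θ i := by have := hord i hi j hj hij; linarith
      have hy : 0 < θ k - θ j := by have := hord j hj k hk hjk; linarith
      have hxy : (θ j - θ i) + (θ k - θ j) < Real.pi := by
        have := hd k hk i hi; linarith
      have key := sin_ineq hx hy hxy
      rw [show θ j - θ i + (θ k - θ j) = θ k - θ i by ring] at key
      have e1 : Real.sin (θ i - θ k) = -Real.sin (θ k - θ i) := by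
        rw [show θ i - θ k = -(θ k - θ i) by ring, Real.sin_neg]
      have hS : 0 < Real.sin (θ k - θ j) + Real.sin (θ j - θ i) + Real.sin (θ i - θ k) := by
        rw [e1]; linarith
      rw [one_mul]; exact mul_pos (pow_pos hr 2) hS
    · have hx : 0 < θ i - θ j := by have := hord i hi j hj hij; linarith
      have hy : 0 < θ j - θ k := by have := hord j hj k hk hjk; linarith
      have hxy : (θ i - θ j) + (θ j - θ k) < Real.pi := by
        have := hd i hi k hk; linarith
      have key := sin_ineq hx hy hxy
      rw [show θ i - θ j + (θ j - θ k) = θ i - θ k by ring] at key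
      have e1 : Real.sin (θ k - θ j) = -Real.sin (θ j - θ k) := by
        rw [show θ k - θ j = -(θ j - θ k) by ring, Real.sin_neg]
      have e2 : Real.sin (θ j - θ i) = -Real.sin (θ i - θ j) := by
        rw [show θ j - θ i = -(θ i - θ j) by ring, Real.sin_neg]
      have hS : Real.sin (θ k - θ j) + Real.sin (θ j - θ i) + Real.sin (θ i - θ k) < 0 := by
        rw [e1, e2]; linarith
      have := mul_pos (pow_pos hr 2) (neg_pos.2 hS)
      nlinarith
  · -- acute at p 1
    have h1 := hmem 1 le_rfl (by omega)
    have h2 := hmem 2 (by omega) (by omega)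
    have hmm := hmem m (by omega) le_rfl
    have hinner : 0 < ⟪p 2 - p 1, p m - p 1⟫ := by
      rw [hp 2 h2, hp 1 h1, hp m hmm, inner_formula]
      have ecos : Real.cos (θ 1 - θ m) = Real.cos (θ m - θ 1) := by
        rw [show θ 1 - θ m = -(θ m - θ 1) by ring, Real.cos_neg]
      rw [ecos, show θ 2 - θ m = (θ 2 - θ 1) - (θ m - θ 1) by ring,
        half_angle (θ 2 - θ 1) (θ m - θ 1),
        show ((θ 2 - θ 1) - (θ m - θ 1))/2 = (θ 2 - θ m)/2 by ring]
      have s1 := hsin 2 h2 1 h1 (by omega)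
      have s2 := hsin m hmm 1 h1 (by omega)
      have c1 := hcos 2 h2 m hmm
      have hprod : 0 < Real.sin ((θ 2 - θ 1)/2) * Real.sin ((θ m - θ 1)/2) := by
        nlinarith [mul_pos s1 s2]
      nlinarith [mul_pos (mul_pos hprod c1) (pow_pos hr 2)]
    exact euclid_angle_lt (hchord_ne 2 h2 1 h1 (by omega)) (hchord_ne m hmm 1 h1 (by omega))
      hinner
  · -- acute at p m
    have h1 := hmem 1 le_rfl (by omega)
    have hm1 := hmem (m-1) (by omega) (by omega)
    have hmm := hmem m (by omega) le_rfl
    have hinner : 0 < ⟪p (m-1) - p m, p 1 - p m⟫ := by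
      rw [hp (m-1) hm1, hp m hmm, hp 1 h1, inner_formula]
      have ecos : Real.cos (θ m - θ 1) = Real.cos (θ 1 - θ m) := by
        rw [show θ m - θ 1 = -(θ 1 - θ m) by ring, Real.cos_neg]
      rw [ecos, show θ (m-1) - θ 1 = (θ (m-1) - θ m) - (θ 1 - θ m) by ring,
        half_angle (θ (m-1) - θ m) (θ 1 - θ m),
        show ((θ (m-1) - θ m) - (θ 1 - θ m))/2 = (θ (m-1) - θ 1)/2 by ring]
      have s1 := hsin m hmm (m-1) hm1 (by omega)
      have s2 := hsin m hmm 1 h1 (by omega)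
      have c1 := hcos (m-1) hm1 1 h1
      have e1 : Real.sin ((θ (m-1) - θ m)/2) = -Real.sin ((θ m - θ (m-1))/2) := by
        rw [show (θ (m-1) - θ m)/2 = -((θ m - θ (m-1))/2) by ring, Real.sin_neg]
      have e2 : Real.sin ((θ 1 - θ m)/2) = -Real.sin ((θ m - θ 1)/2) := by
        rw [show (θ 1 - θ m)/2 = -((θ m - θ 1)/2) by ring, Real.sin_neg]
      rw [e1, e2]
      have hprod : 0 < Real.sin ((θ m - θ (m-1))/2) * Real.sin ((θ m - θ 1)/2) := by
        nlinarith [mul_pos s1 s2]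
      nlinarith [mul_pos (mul_pos hprod c1) (pow_pos hr 2)]
    exact euclid_angle_lt (hchord_ne (m-1) hm1 m hmm (by omega))
      (hchord_ne 1 h1 m hmm (by omega)) hinner
  · -- obtuse at middle points
    intro i hi2 him
    have hi := hmem i (by omega) (by omega)
    have hil := hmem (i-1) (by omega) (by omega)
    have hir := hmem (i+1) (by omega) (by omega)
    have hinner : ⟪p (i-1) - p i, p (i+1) - p i⟫ < 0 := by
      rw [hp (i-1) hil, hp i hi, hp (i+1) hir, inner_formula]
      have ecos : Real.cos (θ i - θ (i+1)) = Real.cos (θ (i+1) - θ i) := by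
        rw [show θ i - θ (i+1) = -(θ (i+1) - θ i) by ring, Real.cos_neg]
      rw [ecos, show θ (i-1) - θ (i+1) = (θ (i-1) - θ i) - (θ (i+1) - θ i) by ring,
        half_angle (θ (i-1) - θ i) (θ (i+1) - θ i),
        show ((θ (i-1) - θ i) - (θ (i+1) - θ i))/2 = (θ (i-1) - θ (i+1))/2 by ring]
      have s1 := hsin i hi (i-1) hil (by omega)
      have s2 := hsin (i+1) hir i hi (by omega)
      have c1 := hcos (i-1) hil (i+1) hir
      have e1 : Real.sin ((θ (i-1) - θ i)/2) = -Real.sin ((θ i - θ (i-1))/2) := by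
        rw [show (θ (i-1) - θ i)/2 = -((θ i - θ (i-1))/2) by ring, Real.sin_neg]
      rw [e1]
      have hprod : 0 < Real.sin ((θ i - θ (i-1))/2) * Real.sin ((θ (i+1) - θ i)/2) := by
        nlinarith [mul_pos s1 s2]
      nlinarith [mul_pos (mul_pos hprod c1) (pow_pos hr 2)]
    exact euclid_angle_gt (hchord_ne (i-1) hil i hi (by omega))
      (hchord_ne (i+1) hir i hi (by omega)) hinner

end
end

section
/- Let π be a half-circle with center O and radius r > 0, and let p_1, …, p_N (N ≥ 3) be distinct points on π ordered along the arc. For each j ∈ {2, …, N−1}, let S_j ⊆ ℝ² be a set contained in the interior of triangle p_{j−1} p_j p_{j+1} and in the interior of triangle p_1 p_j p_N. Let j_1 < j_2 < … < j_m (m ≥ 3) be indices in {1, …, N} with 2 ≤ j_i ≤ N−1 for 2 ≤ i ≤ m−1, and let Q be the convex hull of {p_{j_1}, …, p_{j_m}}. Then for every i with 2 ≤ i ≤ m−1, the set S_{j_i} is contained in the topological interior of Q. -/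
set_option maxHeartbeats 1000000


open Set Metric Bornology
open scoped RealInnerProductSpace

noncomputable section

/-! ### Auxiliary lemmas -/

lemma cross2_anticomm (u v : E2) : cross2 u v = - cross2 v u := by
  simp [cross2]; ring

lemma cross2_self (u : E2) : cross2 u u = 0 := by simp [cross2]; ring

lemma cross2_comb2 (u v w : E2) (α γ : ℝ) :
    cross2 u (α • v + γ • w) = α * cross2 u v + γ * cross2 u w := by
  simp only [cross2, PiLp.add_apply, PiLp.smul_apply, smul_eq_mul]; ring

lemma cross2_comb3 (u v w z : E2) (α β γ : ℝ) :
    cross2 u (α • v + β • w + γ • z)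
      = α * cross2 u v + β * cross2 u w + γ * cross2 u z := by
  simp only [cross2, PiLp.add_apply, PiLp.smul_apply, smul_eq_mul]; ring

/-- Cyclic invariance of the orientation form. -/
lemma orient_cyc (A B C : E2) :
    cross2 (B - A) (C - A) = cross2 (A - C) (B - C) := by
  simp only [cross2, PiLp.sub_apply]; ring

/-- Swapping the first two points negates orientation. -/
lemma orient_swap12 (A B C : E2) :
    cross2 (B - A) (C - A) = - cross2 (A - B) (C - B) := by
  simp only [cross2, PiLp.sub_apply]; ring

/-- Reversal negates orientation. -/
lemma orient_rev (A B C : E2) :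
    cross2 (B - C) (A - C) = - cross2 (B - A) (C - A) := by
  simp only [cross2, PiLp.sub_apply]; ring

/-- Plücker-type identity for four planar vectors. -/
lemma pluecker (a b c w : E2) :
    cross2 a b * cross2 c w - cross2 a c * cross2 b w + cross2 b c * cross2 a w = 0 := by
  simp only [cross2]; ring

lemma circPt_apply0 (O : E2) (r θ : ℝ) : circPt O r θ 0 = O 0 + r * Real.cos θ := by
  simp [circPt]

lemma circPt_apply1 (O : E2) (r θ : ℝ) : circPt O r θ 1 = O 1 + r * Real.sin θ := by
  simp [circPt]

lemma sin_add_lt {x y : ℝ} (hx : 0 < x) (hy : 0 < y) (hxy : x + y ≤ Real.pi) :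
    Real.sin (x + y) < Real.sin x + Real.sin y := by
  have hxpi : x < Real.pi := by linarith
  have hypi : y < Real.pi := by linarith
  have hsx : 0 < Real.sin x := Real.sin_pos_of_pos_of_lt_pi hx hxpi
  have hsy : 0 < Real.sin y := Real.sin_pos_of_pos_of_lt_pi hy hypi
  have hcx : Real.cos x < 1 := by
    have := Real.strictAntiOn_cos (left_mem_Icc.2 Real.pi_pos.le) ⟨hx.le, hxpi.le⟩ hx
    simpa using this
  have hcy : Real.cos y ≤ 1 := Real.cos_le_one y
  rw [Real.sin_add]
  nlinarith

/-- Three points in increasing angular position on an arc of length at most `π`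
are positively oriented. -/
lemma circ_orient (O : E2) {r : ℝ} (hr : 0 < r) {a b c : ℝ} (hab : a < b) (hbc : b < c)
    (hca : c - a ≤ Real.pi) :
    0 < cross2 (circPt O r b - circPt O r a) (circPt O r c - circPt O r a) := by
  have key : cross2 (circPt O r b - circPt O r a) (circPt O r c - circPt O r a)
      = r ^ 2 * (Real.sin (b - a) + Real.sin (c - b) - Real.sin (c - a)) := by
    simp only [cross2, PiLp.sub_apply, circPt_apply0, circPt_apply1,
      Real.sin_sub, Real.cos_sub]
    ring
  rw [key]
  have h := sin_add_lt (show 0 < b - a by linarith) (show 0 < c - b by linarith)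
    (by linarith [hca])
  have heq : b - a + (c - b) = c - a := by ring
  rw [heq] at h
  have := pow_pos hr 2
  nlinarith

lemma mem_triangle {a b c x : E2} (hx : x ∈ convexHull ℝ ({a, b, c} : Set E2)) :
    ∃ α β γ : ℝ, 0 ≤ α ∧ 0 ≤ β ∧ 0 ≤ γ ∧ α + β + γ = 1 ∧ α • a + β • b + γ • c = x := by
  rw [show ({a, b, c} : Set E2) = insert a {b, c} from rfl,
    convexHull_insert ⟨b, by simp⟩, convexHull_pair, mem_convexJoin] at hx
  obtain ⟨a', ha', y, hy, hxy⟩ := hx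
  rw [mem_singleton_iff] at ha'
  subst ha'
  obtain ⟨u, v, hu, hv, huv, hy⟩ := hy
  obtain ⟨s, t, hs, ht, hst, hx⟩ := hxy
  refine ⟨s, t * u, t * v, hs, by positivity, by positivity, by nlinarith, ?_⟩
  rw [← hx, ← hy]
  module

/-- Core geometric lemma: the intersection of the triangles `p(j-1) p(j) p(j+1)` and
`p(1) p(j) p(N)` is contained in the triangle `p(a) p(j) p(b)` whenever
`1 ≤ a < j < b ≤ N` and the points are in convex position (orientation `σ`). -/
lemma core_triangle (p : ℕ → E2) (σ : ℝ) (hσ : σ = 1 ∨ σ = -1) {N a j b : ℕ}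
    (K : ∀ u v w : ℕ, 1 ≤ u → u < v → v < w → w ≤ N →
      0 < σ * cross2 (p v - p u) (p w - p u))
    (ha : 1 ≤ a) (haj : a < j) (hjb : j < b) (hbN : b ≤ N) :
    convexHull ℝ ({p (j - 1), p j, p (j + 1)} : Set E2) ∩
      convexHull ℝ ({p 1, p j, p N} : Set E2)
      ⊆ convexHull ℝ ({p a, p j, p b} : Set E2) := by
  have hσσ : σ * σ = 1 := by rcases hσ with h | h <;> rw [h] <;> norm_num
  have hj2 : 2 ≤ j := by omega
  have hjN : j + 1 ≤ N := by omega
  -- orientation facts rebased at `p j`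
  have hL : ∀ u v : ℕ, 1 ≤ u → u < v → v < j →
      0 < σ * cross2 (p u - p j) (p v - p j) := by
    intro u v hu huv hvj
    have h := K u v j hu huv hvj (by omega)
    rwa [orient_cyc (p u) (p v) (p j)] at h
  have hM : ∀ u v : ℕ, 1 ≤ u → u < j → j < v → v ≤ N →
      σ * cross2 (p u - p j) (p v - p j) < 0 := by
    intro u v hu huj hjv hvN
    have h := K u j v hu huj hjv hvN
    rw [orient_swap12 (p u) (p j) (p v)] at h
    nlinarith
  have hR : ∀ u v : ℕ, j < u → u < v → v ≤ N →
      0 < σ * cross2 (p u - p j) (p v - p j) := by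
    intro u v hju huv hvN
    exact K j u v (by omega) hju huv hvN
  rintro x ⟨hx1, hx2⟩
  obtain ⟨α1, β1, γ1, hα1, hβ1, hγ1, hs1, hc1⟩ := mem_triangle hx1
  obtain ⟨α2, β2, γ2, hα2, hβ2, hγ2, hs2, hc2⟩ := mem_triangle hx2
  have hw1 : x - p j = α1 • (p (j - 1) - p j) + γ1 • (p (j + 1) - p j) := by
    rw [← hc1, show β1 = 1 - α1 - γ1 by linarith]
    module
  have hw2 : x - p j = α2 • (p 1 - p j) + γ2 • (p N - p j) := by
    rw [← hc2, show β2 = 1 - α2 - γ2 by linarith]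
    module
  -- the four half-plane conditions at `p j`
  have cB : σ * cross2 (p (j - 1) - p j) (x - p j) ≤ 0 := by
    have h0 := hM (j - 1) (j + 1) (by omega) (by omega) (by omega) (by omega)
    have he : cross2 (p (j - 1) - p j) (x - p j)
        = α1 * cross2 (p (j - 1) - p j) (p (j - 1) - p j)
          + γ1 * cross2 (p (j - 1) - p j) (p (j + 1) - p j) := by
      rw [hw1, cross2_comb2]
    rw [he, cross2_self]
    nlinarith
  have cB' : 0 ≤ σ * cross2 (p (j + 1) - p j) (x - p j) := by
    have h0 := hM (j - 1) (j + 1) (by omega) (by omega) (by omega) (by omega)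
    have he : cross2 (p (j + 1) - p j) (x - p j)
        = α1 * cross2 (p (j + 1) - p j) (p (j - 1) - p j)
          + γ1 * cross2 (p (j + 1) - p j) (p (j + 1) - p j) := by
      rw [hw1, cross2_comb2]
    rw [he, cross2_self, cross2_anticomm (p (j + 1) - p j)]
    nlinarith
  have cA : σ * cross2 (p 1 - p j) (x - p j) ≤ 0 := by
    have h0 := hM 1 N le_rfl (by omega) (by omega) le_rfl
    have he : cross2 (p 1 - p j) (x - p j)
        = α2 * cross2 (p 1 - p j) (p 1 - p j)
          + γ2 * cross2 (p 1 - p j) (p N - p j) := by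
      rw [hw2, cross2_comb2]
    rw [he, cross2_self]
    nlinarith
  have cA' : 0 ≤ σ * cross2 (p N - p j) (x - p j) := by
    have h0 := hM 1 N le_rfl (by omega) (by omega) le_rfl
    have he : cross2 (p N - p j) (x - p j)
        = α2 * cross2 (p N - p j) (p 1 - p j)
          + γ2 * cross2 (p N - p j) (p N - p j) := by
      rw [hw2, cross2_comb2]
    rw [he, cross2_self, cross2_anticomm (p N - p j)]
    nlinarith
  -- G1 : x is on the correct side of the line p a -- p j
  have G1 : σ * cross2 (p a - p j) (x - p j) ≤ 0 := by
    rcases eq_or_lt_of_le ha with h1a | h1a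
    · rw [← h1a]; exact cA
    · rcases eq_or_lt_of_le (show a ≤ j - 1 by omega) with haj1 | haj1
      · rw [haj1]; exact cB
      · have P12 := hL 1 a le_rfl h1a (by omega)
        have P23 := hL a (j - 1) (by omega) haj1 (by omega)
        have P13 := hL 1 (j - 1) le_rfl (by omega) (by omega)
        have id := pluecker (p 1 - p j) (p a - p j) (p (j - 1) - p j) (x - p j)
        have id2 : (σ * cross2 (p 1 - p j) (p a - p j))
              * (σ * cross2 (p (j - 1) - p j) (x - p j))
            - (σ * cross2 (p 1 - p j) (p (j - 1) - p j))
              * (σ * cross2 (p a - p j) (x - p j))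
            + (σ * cross2 (p a - p j) (p (j - 1) - p j))
              * (σ * cross2 (p 1 - p j) (x - p j)) = 0 := by
          linear_combination (cross2 (p 1 - p j) (p a - p j)
              * cross2 (p (j - 1) - p j) (x - p j)
            - cross2 (p 1 - p j) (p (j - 1) - p j) * cross2 (p a - p j) (x - p j)
            + cross2 (p a - p j) (p (j - 1) - p j) * cross2 (p 1 - p j) (x - p j)) * hσσ
            + id
        have h1 := mul_nonpos_of_nonneg_of_nonpos P12.le cB
        have h2 := mul_nonpos_of_nonneg_of_nonpos P23.le cA
        have h3 : (σ * cross2 (p 1 - p j) (p (j - 1) - p j))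
            * (σ * cross2 (p a - p j) (x - p j)) ≤ 0 := by linarith
        by_contra hpos
        push_neg at hpos
        nlinarith [mul_pos P13 hpos]
  -- G2 : x is on the correct side of the line p j -- p b
  have G2 : 0 ≤ σ * cross2 (p b - p j) (x - p j) := by
    rcases eq_or_lt_of_le (show j + 1 ≤ b by omega) with hb1 | hb1
    · rw [← hb1]; exact cB'
    · rcases eq_or_lt_of_le hbN with hbN' | hbN'
      · rw [hbN']; exact cA'
      · have Q12 := hR (j + 1) b (by omega) hb1 (by omega)
        have Q23 := hR b N (by omega) hbN' le_rfl
        have Q13 := hR (j + 1) N (by omega) (by omega) le_rfl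
        have id := pluecker (p (j + 1) - p j) (p b - p j) (p N - p j) (x - p j)
        have id2 : (σ * cross2 (p (j + 1) - p j) (p b - p j))
              * (σ * cross2 (p N - p j) (x - p j))
            - (σ * cross2 (p (j + 1) - p j) (p N - p j))
              * (σ * cross2 (p b - p j) (x - p j))
            + (σ * cross2 (p b - p j) (p N - p j))
              * (σ * cross2 (p (j + 1) - p j) (x - p j)) = 0 := by
          linear_combination (cross2 (p (j + 1) - p j) (p b - p j)
              * cross2 (p N - p j) (x - p j)
            - cross2 (p (j + 1) - p j) (p N - p j) * cross2 (p b - p j) (x - p j)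
            + cross2 (p b - p j) (p N - p j) * cross2 (p (j + 1) - p j) (x - p j)) * hσσ
            + id
        have h1 := mul_nonneg Q12.le cA'
        have h2 := mul_nonneg Q23.le cB'
        have h3 : 0 ≤ (σ * cross2 (p (j + 1) - p j) (p N - p j))
            * (σ * cross2 (p b - p j) (x - p j)) := by linarith
        by_contra hpos
        push_neg at hpos
        nlinarith [mul_pos Q13 (neg_pos.mpr hpos)]
  -- G3 : x is on the correct side of the line p a -- p b
  have G3 : σ * cross2 (p b - p a) (x - p a) ≤ 0 := by
    have hwa : x - p a = α1 • (p (j - 1) - p a) + β1 • (p j - p a)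
        + γ1 • (p (j + 1) - p a) := by
      rw [← hc1, show β1 = 1 - α1 - γ1 by linarith]
      module
    have t1 : σ * cross2 (p b - p a) (p (j - 1) - p a) ≤ 0 := by
      rcases eq_or_lt_of_le (show a ≤ j - 1 by omega) with h | h
      · rw [← h, sub_self]
        simp [cross2]
      · have hk := K a (j - 1) b ha h (by omega) hbN
        rw [cross2_anticomm (p b - p a)]
        nlinarith
    have t2 : σ * cross2 (p b - p a) (p j - p a) ≤ 0 := by
      have hk := K a j b ha haj hjb hbN
      rw [cross2_anticomm (p b - p a)]
      nlinarith
    have t3 : σ * cross2 (p b - p a) (p (j + 1) - p a) ≤ 0 := by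
      rcases eq_or_lt_of_le (show j + 1 ≤ b by omega) with h | h
      · rw [← h, cross2_self]; simp
      · have hk := K a (j + 1) b ha (by omega) h hbN
        rw [cross2_anticomm (p b - p a)]
        nlinarith
    have he : cross2 (p b - p a) (x - p a)
        = α1 * cross2 (p b - p a) (p (j - 1) - p a)
          + β1 * cross2 (p b - p a) (p j - p a)
          + γ1 * cross2 (p b - p a) (p (j + 1) - p a) := by
      rw [hwa, cross2_comb3]
    rw [he]
    nlinarith [mul_nonpos_of_nonneg_of_nonpos hα1 t1,
      mul_nonpos_of_nonneg_of_nonpos hβ1 t2,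
      mul_nonpos_of_nonneg_of_nonpos hγ1 t3]
  -- assemble barycentric coordinates
  have D := K a j b ha haj hjb hbN
  set W0 : ℝ := σ * cross2 (p b - p j) (x - p j) with hW0
  set W1 : ℝ := σ * cross2 (x - p a) (p b - p a) with hW1
  set W2 : ℝ := σ * cross2 (p j - p a) (x - p a) with hW2
  have hW1n : 0 ≤ W1 := by
    rw [hW1, cross2_anticomm (x - p a)]
    nlinarith [G3]
  have hW2n : 0 ≤ W2 := by
    rw [hW2, orient_swap12 (p a) (p j) x]
    nlinarith [G1]
  have hW0n : 0 ≤ W0 := G2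
  have hsum : W0 + W1 + W2 = σ * cross2 (p j - p a) (p b - p a) := by
    rw [hW0, hW1, hW2]
    simp only [cross2, PiLp.sub_apply]
    ring
  have hvec : W0 • p a + W1 • p j + W2 • p b = (σ * cross2 (p j - p a) (p b - p a)) • x := by
    rw [hW0, hW1, hW2]
    ext i
    fin_cases i <;>
      · simp only [PiLp.add_apply, PiLp.smul_apply, smul_eq_mul, cross2, PiLp.sub_apply,
          Fin.zero_eta, Fin.mk_one, Fin.isValue]
        ring
  have hmem := Finset.centerMass_mem_convexHull (s := ({p a, p j, p b} : Set E2))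
    (Finset.univ : Finset (Fin 3)) (w := ![W0, W1, W2])
    (by intro i _; fin_cases i <;> simpa)
    (by rw [Fin.sum_univ_three]; simp only [Matrix.cons_val_zero, Matrix.cons_val_one,
        Matrix.head_cons, Matrix.cons_val_two, Matrix.tail_cons]; linarith)
    (z := ![p a, p j, p b]) (by intro i _; fin_cases i <;> simp)
  have hcm : Finset.univ.centerMass ![W0, W1, W2] ![p a, p j, p b] = x := by
    rw [Finset.centerMass, Fin.sum_univ_three, Fin.sum_univ_three]
    simp only [Matrix.cons_val_zero, Matrix.cons_val_one, Matrix.head_cons,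
      Matrix.cons_val_two, Matrix.tail_cons]
    rw [hvec, hsum, smul_smul, inv_mul_cancel₀ (ne_of_gt D), one_smul]
  rwa [hcm] at hmem

/-- Polygon containment property: for points `p 1, …, p N` ordered along a half-circle
with center `O`, with each `S j` contained in the interiors of the triangles
`p (j-1) p j p (j+1)` and `p 1 p j p N`, if `Q` is the convex hull of points
`p (jj 1), …, p (jj m)` with strictly increasing indices, then for every middle index
`i` the set `S (jj i)` is contained in the topological interior of `Q`. -/
theorem polygon_contains_middle_point_sets (O : E2) (r : ℝ) (hr : 0 < r) (θ₀ : ℝ)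
    (N : ℕ) (hN : 3 ≤ N) (θ : ℕ → ℝ) (p : ℕ → E2) (S : ℕ → Set E2)
    (hmono : StrictMonoOn θ (Set.Icc 1 N) ∨ StrictAntiOn θ (Set.Icc 1 N))
    (hθ : ∀ i ∈ Set.Icc 1 N, θ i ∈ Set.Icc θ₀ (θ₀ + Real.pi))
    (hp : ∀ i ∈ Set.Icc 1 N, p i = circPt O r (θ i))
    (hS : ∀ j : ℕ, 2 ≤ j → j ≤ N - 1 →
      S j ⊆ interior (convexHull ℝ {p (j - 1), p j, p (j + 1)}) ∧
      S j ⊆ interior (convexHull ℝ {p 1, p j, p N}))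
    (m : ℕ) (hm : 3 ≤ m) (jj : ℕ → ℕ)
    (hjmono : StrictMonoOn jj (Set.Icc 1 m))
    (hjrange : ∀ i ∈ Set.Icc 1 m, jj i ∈ Set.Icc 1 N)
    (hjmid : ∀ i : ℕ, 2 ≤ i → i ≤ m - 1 → 2 ≤ jj i ∧ jj i ≤ N - 1) :
    ∀ i : ℕ, 2 ≤ i → i ≤ m - 1 →
      S (jj i) ⊆ interior (convexHull ℝ ((fun k => p (jj k)) '' Set.Icc 1 m)) := by
  -- first, extract the uniform orientation of the points
  have hθbound : ∀ u w : ℕ, u ∈ Set.Icc 1 N → w ∈ Set.Icc 1 N → θ w - θ u ≤ Real.pi := by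
    intro u w hu hw
    have h1 := hθ u hu
    have h2 := hθ w hw
    simp only [Set.mem_Icc] at h1 h2
    linarith [h1.1, h2.2]
  obtain ⟨σ, hσ, K⟩ : ∃ σ : ℝ, (σ = 1 ∨ σ = -1) ∧ ∀ u v w : ℕ, 1 ≤ u → u < v → v < w →
      w ≤ N → 0 < σ * cross2 (p v - p u) (p w - p u) := by
    rcases hmono with hinc | hdec
    · refine ⟨1, Or.inl rfl, ?_⟩
      intro u v w hu huv hvw hwN
      have hum : u ∈ Set.Icc 1 N := by simp; omega
      have hvm : v ∈ Set.Icc 1 N := by simp; omega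
      have hwm : w ∈ Set.Icc 1 N := by simp; omega
      rw [one_mul, hp u hum, hp v hvm, hp w hwm]
      exact circ_orient O hr (hinc hum hvm huv) (hinc hvm hwm hvw) (hθbound u w hum hwm)
    · refine ⟨-1, Or.inr rfl, ?_⟩
      intro u v w hu huv hvw hwN
      have hum : u ∈ Set.Icc 1 N := by simp; omega
      have hvm : v ∈ Set.Icc 1 N := by simp; omega
      have hwm : w ∈ Set.Icc 1 N := by simp; omega
      have h := circ_orient O hr (hdec hvm hwm hvw) (hdec hum hvm huv) (hθbound w u hwm hum)
      rw [← hp u hum, ← hp v hvm, ← hp w hwm] at h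
      rw [orient_rev (p u) (p v) (p w)] at h
      nlinarith
  intro i h2i him x hx
  have him' : i + 1 ≤ m := by omega
  have hi1 : i - 1 ∈ Set.Icc 1 m := by simp; omega
  have hii : i ∈ Set.Icc 1 m := by simp; omega
  have hi2 : i + 1 ∈ Set.Icc 1 m := by simp; omega
  have ⟨hj2, hjN1⟩ := hjmid i h2i him
  have haj : jj (i - 1) < jj i := hjmono hi1 hii (by omega)
  have hjb : jj i < jj (i + 1) := hjmono hii hi2 (by omega)
  have ha1 : 1 ≤ jj (i - 1) := (hjrange _ hi1).1
  have hbN : jj (i + 1) ≤ N := (hjrange _ hi2).2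
  obtain ⟨hT1, hT2⟩ := hS (jj i) hj2 hjN1
  have hsub := core_triangle p σ hσ K ha1 haj hjb hbN
  have hx12 : x ∈ interior (convexHull ℝ ({p (jj i - 1), p (jj i), p (jj i + 1)} : Set E2) ∩
      convexHull ℝ ({p 1, p (jj i), p N} : Set E2)) := by
    rw [interior_inter]
    exact ⟨hT1 hx, hT2 hx⟩
  have hx3 : x ∈ interior (convexHull ℝ
      ({p (jj (i - 1)), p (jj i), p (jj (i + 1))} : Set E2)) :=
    interior_mono hsub hx12
  refine interior_mono (convexHull_mono ?_) hx3
  intro y hy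
  rcases hy with h | h | h
  · exact ⟨i - 1, hi1, h.symm⟩
  · exact ⟨i, hii, h.symm⟩
  · exact ⟨i + 1, hi2, (mem_singleton_iff.mp h).symm⟩

end
end

section
/- Let π be a half-circle with center O and radius r > 0, and let p_1, …, p_N (N ≥ 3) be distinct points on π ordered along the arc. Then for every j ∈ {2, …, N−1} there exists a closed disk whose center lies on the open segment from p_j to O and which is contained in the interior of triangle p_{j−1} p_j p_{j+1} and in the interior of triangle p_1 p_j p_N. -/
open Set Metric Bornology
open scoped RealInnerProductSpace

noncomputable section

lemma not_collinear_of_cross2 {a b c : E2} (h : cross2 (b - a) (c - a) ≠ 0) :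
    ¬ Collinear ℝ ({a, b, c} : Set E2) := by
  intro hcol
  rw [collinear_iff_of_mem (Set.mem_insert a _)] at hcol
  obtain ⟨v, hv⟩ := hcol
  obtain ⟨tb, htb⟩ := hv b (by simp)
  obtain ⟨tc, htc⟩ := hv c (by simp)
  apply h
  subst htb htc
  simp only [cross2, vadd_eq_add, PiLp.add_apply, PiLp.sub_apply, PiLp.smul_apply,
    smul_eq_mul]
  ring

lemma mem_interior_of_pos_combo {v : Fin 3 → E2} (hv : AffineIndependent ℝ v)
    {w : Fin 3 → ℝ} (hw : ∀ i, 0 < w i) (hw1 : ∑ i, w i = 1) :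
    ∑ i, w i • v i ∈ interior (convexHull ℝ (Set.range v)) := by
  have htop : affineSpan ℝ (Set.range v) = ⊤ := by
    rw [hv.affineSpan_eq_top_iff_card_eq_finrank_add_one]
    simp [finrank_euclideanSpace_fin]
  let b : AffineBasis (Fin 3) ℝ E2 := ⟨v, hv, htop⟩
  have hrange : Set.range (b : Fin 3 → E2) = Set.range v := rfl
  rw [← hrange, AffineBasis.interior_convexHull]
  have he : ∑ i, w i • v i = Finset.univ.affineCombination ℝ v w := by
    rw [Finset.affineCombination_eq_linear_combination _ _ _ (by simpa using hw1)]
  rw [he]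
  intro i
  have := b.coord_apply_combination_of_mem (Finset.mem_univ i) (w := w) (by simpa using hw1)
  rw [show Finset.univ.affineCombination ℝ v w
      = Finset.univ.affineCombination ℝ (b : Fin 3 → E2) w from rfl, this]
  exact hw i

lemma trig3 (x y : ℝ) : Real.sin (2*x) + Real.sin (2*y) - Real.sin (2*(x+y))
    = 4 * Real.sin x * Real.sin y * Real.sin (x+y) := by
  rw [Real.sin_two_mul, Real.sin_two_mul, Real.sin_two_mul, Real.sin_add, Real.cos_add]
  linear_combination (-2*Real.sin x*Real.cos x) * (Real.sin_sq_add_cos_sq y)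
    + (-2*Real.sin y*Real.cos y) * (Real.sin_sq_add_cos_sq x)

lemma Spos {α β γ : ℝ} (hαβ : α < β) (hβγ : β < γ) (hγα : γ - α ≤ Real.pi) :
    0 < Real.sin (β-α) + Real.sin (γ-β) - Real.sin (γ-α) := by
  have hpi := Real.pi_pos
  have e := trig3 ((β-α)/2) ((γ-β)/2)
  rw [show 2*((β-α)/2) = β - α from by ring, show 2*((γ-β)/2) = γ - β from by ring,
    show 2*((β-α)/2 + (γ-β)/2) = γ - α from by ring] at e
  have h1 := Real.sin_pos_of_pos_of_lt_pi (x := (β-α)/2) (by linarith) (by linarith)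
  have h2 := Real.sin_pos_of_pos_of_lt_pi (x := (γ-β)/2) (by linarith) (by linarith)
  have h3 := Real.sin_pos_of_pos_of_lt_pi (x := (β-α)/2 + (γ-β)/2) (by linarith) (by linarith)
  rw [e]; nlinarith [mul_pos (mul_pos h1 h2) h3]

lemma trig1 (α β γ : ℝ) :
    Real.sin (γ-β) * Real.cos α + Real.sin (β-α) * Real.cos γ = Real.sin (γ-α) * Real.cos β := by
  simp only [Real.sin_sub]; ring

lemma trig2 (α β γ : ℝ) :
    Real.sin (γ-β) * Real.sin α + Real.sin (β-α) * Real.sin γ = Real.sin (γ-α) * Real.sin β := by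
  simp only [Real.sin_sub]; ring

lemma key (O : E2) {r : ℝ} (hr : 0 < r) {α β γ : ℝ} (hαβ : α < β) (hβγ : β < γ)
    (hγα : γ - α ≤ Real.pi) :
    ∃ t₀ : ℝ, 0 < t₀ ∧ ∀ t : ℝ, 0 < t → t < t₀ →
      (1 - t) • circPt O r β + t • O ∈
        interior (convexHull ℝ ({circPt O r α, circPt O r β, circPt O r γ} : Set E2)) := by
  have hpi := Real.pi_pos
  have hS : 0 < Real.sin (β-α) + Real.sin (γ-β) - Real.sin (γ-α) := Spos hαβ hβγ hγα
  set S := Real.sin (β-α) + Real.sin (γ-β) - Real.sin (γ-α) with hSdef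
  have hsβα : 0 < Real.sin (β-α) := Real.sin_pos_of_pos_of_lt_pi (by linarith) (by linarith)
  have hsγβ : 0 < Real.sin (γ-β) := Real.sin_pos_of_pos_of_lt_pi (by linarith) (by linarith)
  have hsγα : 0 ≤ Real.sin (γ-α) := Real.sin_nonneg_of_nonneg_of_le_pi (by linarith) hγα
  refine ⟨S / (S + Real.sin (γ-α) + 1), div_pos hS (by linarith), ?_⟩
  intro t ht ht'
  have htS : t * (S + Real.sin (γ-α)) < S := by
    rw [lt_div_iff₀ (by linarith)] at ht'
    nlinarith
  set v : Fin 3 → E2 := ![circPt O r α, circPt O r β, circPt O r γ] with hvdef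
  set w : Fin 3 → ℝ :=
    ![t * Real.sin (γ-β) / S, 1 - t * (S + Real.sin (γ-α)) / S, t * Real.sin (β-α) / S]
    with hwdef
  have hw : ∀ i, 0 < w i := by
    intro i
    fin_cases i
    · show 0 < t * Real.sin (γ-β) / S; positivity
    · show 0 < 1 - t * (S + Real.sin (γ-α)) / S
      rw [sub_pos, div_lt_one hS]; exact htS
    · show 0 < t * Real.sin (β-α) / S; positivity
  have hw1 : ∑ i, w i = 1 := by
    rw [hwdef, Fin.sum_univ_three]
    simp only [Matrix.cons_val_zero, Matrix.cons_val_one, Matrix.head_cons,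
      Matrix.cons_val_two, Matrix.tail_cons]
    field_simp
    linear_combination (-t) * hSdef
  have hcross : cross2 (circPt O r β - circPt O r α) (circPt O r γ - circPt O r α)
      = r^2 * S := by
    simp only [cross2, circPt, hSdef, PiLp.sub_apply, PiLp.add_apply, PiLp.smul_apply,
      WithLp.equiv_symm_apply, PiLp.toLp_apply, smul_eq_mul, Matrix.cons_val_zero, Matrix.cons_val_one,
      Matrix.head_cons, Real.sin_sub]
    ring
  have hAff : AffineIndependent ℝ v := by
    rw [hvdef, affineIndependent_iff_not_collinear_set]
    apply not_collinear_of_cross2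
    rw [hcross]
    positivity
  have hcombo : ∑ i, w i • v i = (1 - t) • circPt O r β + t • O := by
    rw [hvdef, hwdef, Fin.sum_univ_three]
    simp only [Matrix.cons_val_zero, Matrix.cons_val_one, Matrix.head_cons,
      Matrix.cons_val_two, Matrix.tail_cons]
    ext i
    simp only [circPt, PiLp.add_apply, PiLp.smul_apply, WithLp.equiv_symm_apply, PiLp.toLp_apply,
      smul_eq_mul, hSdef]
    fin_cases i
    · simp only [Fin.zero_eta, Matrix.cons_val_zero]
      field_simp [show Real.sin (γ - β) + Real.sin (β - α) - Real.sin (γ - α) ≠ 0 by linarith]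
      linear_combination (t * r * (Real.sin (γ - β) + Real.sin (β - α) - Real.sin (γ - α))⁻¹) * trig1 α β γ + (-t * r * Real.cos β) * (mul_inv_cancel₀ (show (Real.sin (γ - β) + Real.sin (β - α) - Real.sin (γ - α)) ≠ 0 by linarith))
    · simp only [Fin.mk_one, Matrix.cons_val_one, Matrix.head_cons, Matrix.cons_val_zero]
      field_simp [show Real.sin (γ - β) + Real.sin (β - α) - Real.sin (γ - α) ≠ 0 by linarith]
      linear_combination (t * r * (Real.sin (γ - β) + Real.sin (β - α) - Real.sin (γ - α))⁻¹) * trig2 α β γ + (-t * r * Real.sin β) * (mul_inv_cancel₀ (show (Real.sin (γ - β) + Real.sin (β - α) - Real.sin (γ - α)) ≠ 0 by linarith))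
  have hrange : ({circPt O r α, circPt O r β, circPt O r γ} : Set E2) = Set.range v := by
    rw [hvdef]
    ext x
    simp only [Matrix.range_cons, Matrix.range_empty, Set.union_empty, Set.union_singleton,
      Set.mem_insert_iff, Set.mem_union, Set.mem_singleton_iff]
    tauto
  rw [hrange, ← hcombo]
  exact mem_interior_of_pos_combo hAff hw hw1

lemma triple_swap (a b c : E2) : ({a, b, c} : Set E2) = {c, b, a} := by
  ext x
  simp only [Set.mem_insert_iff, Set.mem_singleton_iff]
  tauto

/-- Given distinct points `p 1, …, p N` ordered along a half-circle with center `O`,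
for every interior index `j` there is a closed disk of positive radius centered on the
open segment from `p j` to `O`, contained in the interior of the triangle
`p (j-1) p j p (j+1)` and in the interior of the triangle `p 1 p j p N`. -/
theorem exists_disk_in_triangles (O : E2) (r : ℝ) (hr : 0 < r) (θ₀ : ℝ)
    (N : ℕ) (hN : 3 ≤ N) (θ : ℕ → ℝ) (p : ℕ → E2)
    (hmono : StrictMonoOn θ (Set.Icc 1 N) ∨ StrictAntiOn θ (Set.Icc 1 N))
    (hθ : ∀ i ∈ Set.Icc 1 N, θ i ∈ Set.Icc θ₀ (θ₀ + Real.pi))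
    (hp : ∀ i ∈ Set.Icc 1 N, p i = circPt O r (θ i)) :
    ∀ j : ℕ, 2 ≤ j → j ≤ N - 1 →
      ∃ (c : E2) (ρ : ℝ), 0 < ρ ∧
        c ∈ openSegment ℝ (p j) O ∧
        Metric.closedBall c ρ ⊆
          interior (convexHull ℝ {p (j - 1), p j, p (j + 1)}) ∧
        Metric.closedBall c ρ ⊆
          interior (convexHull ℝ {p 1, p j, p N}) := by
  intro j hj2 hjN
  have m1 : (1:ℕ) ∈ Set.Icc 1 N := ⟨le_refl _, by omega⟩
  have mjm : j - 1 ∈ Set.Icc 1 N := ⟨by omega, by omega⟩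
  have mj : j ∈ Set.Icc 1 N := ⟨by omega, by omega⟩
  have mjp : j + 1 ∈ Set.Icc 1 N := ⟨by omega, by omega⟩
  have mN : N ∈ Set.Icc 1 N := ⟨by omega, le_refl _⟩
  rw [hp _ mjm, hp _ mj, hp _ mjp, hp _ m1, hp _ mN]
  have bound : ∀ i k : ℕ, i ∈ Set.Icc 1 N → k ∈ Set.Icc 1 N → θ i - θ k ≤ Real.pi := by
    intro i k hi hk
    have h1 := hθ i hi
    have h2 := hθ k hk
    simp only [Set.mem_Icc] at h1 h2
    linarith
  have hK : (∃ t₀ : ℝ, 0 < t₀ ∧ ∀ t : ℝ, 0 < t → t < t₀ →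
        (1 - t) • circPt O r (θ j) + t • O ∈ interior (convexHull ℝ
          ({circPt O r (θ (j-1)), circPt O r (θ j), circPt O r (θ (j+1))} : Set E2))) ∧
      (∃ t₀ : ℝ, 0 < t₀ ∧ ∀ t : ℝ, 0 < t → t < t₀ →
        (1 - t) • circPt O r (θ j) + t • O ∈ interior (convexHull ℝ
          ({circPt O r (θ 1), circPt O r (θ j), circPt O r (θ N)} : Set E2))) := by
    rcases hmono with h1 | h1
    · constructor
      · exact key O hr (h1 mjm mj (by omega)) (h1 mj mjp (by omega)) (bound _ _ mjp mjm)
      · exact key O hr (h1 m1 mj (by omega)) (h1 mj mN (by omega)) (bound _ _ mN m1)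
    · constructor
      · obtain ⟨t₀, ht₀, H⟩ :=
          key O hr (h1 mj mjp (by omega)) (h1 mjm mj (by omega)) (bound _ _ mjm mjp)
        refine ⟨t₀, ht₀, fun t ha hb => ?_⟩
        rw [triple_swap]
        exact H t ha hb
      · obtain ⟨t₀, ht₀, H⟩ :=
          key O hr (h1 mj mN (by omega)) (h1 m1 mj (by omega)) (bound _ _ m1 mN)
        refine ⟨t₀, ht₀, fun t ha hb => ?_⟩
        rw [triple_swap]
        exact H t ha hb
  obtain ⟨⟨t₁, ht₁, H1⟩, ⟨t₂, ht₂, H2⟩⟩ := hK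
  have hm : 0 < min 1 (min t₁ t₂) := lt_min one_pos (lt_min ht₁ ht₂)
  set t : ℝ := min 1 (min t₁ t₂) / 2 with htdef
  have ht0 : 0 < t := by positivity
  have ht1 : t < 1 := by
    have := min_le_left 1 (min t₁ t₂); rw [htdef]; linarith
  have htt₁ : t < t₁ := by
    have h := min_le_right 1 (min t₁ t₂)
    have h' := min_le_left t₁ t₂
    rw [htdef]; linarith
  have htt₂ : t < t₂ := by
    have h := min_le_right 1 (min t₁ t₂)
    have h' := min_le_right t₁ t₂
    rw [htdef]; linarith
  set c : E2 := (1 - t) • circPt O r (θ j) + t • O with hcdef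
  have hc1 := H1 t ht0 htt₁
  have hc2 := H2 t ht0 htt₂
  have hcmem : c ∈ interior (convexHull ℝ
        ({circPt O r (θ (j-1)), circPt O r (θ j), circPt O r (θ (j+1))} : Set E2)) ∩
      interior (convexHull ℝ ({circPt O r (θ 1), circPt O r (θ j), circPt O r (θ N)} : Set E2)) :=
    ⟨hc1, hc2⟩
  obtain ⟨ε, hε, hball⟩ :=
    Metric.isOpen_iff.mp (isOpen_interior.inter isOpen_interior) c hcmem
  refine ⟨c, ε/2, by positivity, ⟨1 - t, t, by linarith, ht0, by ring, rfl⟩, ?_, ?_⟩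
  · intro x hx
    exact (hball (Metric.closedBall_subset_ball (by linarith) hx)).1
  · intro x hx
    exact (hball (Metric.closedBall_subset_ball (by linarith) hx)).2

end
end
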